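/- arXiv:1912.08557 — 4 statements merged into one kernel-verified Lean document; each statement's English description precedes it below -/
import Mathlib

section
/- Let r > 0 and let f be holomorphic and nowhere vanishing on the punctured disk D(0,r)∖{0} = {z ∈ ℂ : 0 < |z| < r}, and suppose f does not extend to a function meromorphic at 0. Then for every c ∈ ℂ∖{0} and every ε > 0 there exists z with 0 < |z| < ε and f(z) = c; in particular f takes every nonzero complex value infinitely often in every punctured neighborhood of 0. -/
open Filter Topology Metric Set Complex
open scoped ENNReal NNReal Real

namespace EP


/-- Mean value inequality for ℂ → ℂ with `HasDerivAt`. -/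
lemma mvt {s : Set ℂ} (hs : Convex ℝ s) (f f' : ℂ → ℂ)
    (hf : ∀ z ∈ s, HasDerivAt f (f' z) z) {C : ℝ} (hC : ∀ z ∈ s, ‖f' z‖ ≤ C)
    {x y : ℂ} (hx : x ∈ s) (hy : y ∈ s) : ‖f x - f y‖ ≤ C * ‖x - y‖ := by
  have h1 : ∀ z ∈ s, HasFDerivWithinAt f
      (((ContinuousLinearMap.smulRight (1 : ℂ →L[ℂ] ℂ) (f' z))).restrictScalars ℝ) s z := by
    intro z hz
    exact (((hf z hz).hasFDerivAt).restrictScalars ℝ).hasFDerivWithinAt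
  refine hs.norm_image_sub_le_of_norm_hasFDerivWithin_le h1 ?_ hy hx
  intro z hz
  rw [ContinuousLinearMap.norm_restrictScalars, ContinuousLinearMap.norm_smulRight_apply,
    norm_one, one_mul]
  exact hC z hz

/-- Existence of primitives on (half of) a ball centered at 0. -/
lemma exists_primitive {R : ℝ} (hR : 0 < R) {f : ℂ → ℂ}
    (hf : DifferentiableOn ℂ f (ball (0 : ℂ) R)) :
    ∃ F : ℂ → ℂ, ∀ z ∈ ball (0 : ℂ) (R / 2), HasDerivAt F (f z) z := by
  set ρ : ℝ≥0 := (3 * R / 4).toNNReal with hρ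
  have hρR : (ρ : ℝ) = 3 * R / 4 := Real.coe_toNNReal _ (by linarith)
  have hρ0 : 0 < ρ := by
    rw [← NNReal.coe_lt_coe, hρR]; positivity
  have hps : HasFPowerSeriesOnBall f (cauchyPowerSeries f 0 ρ) 0 ρ := by
    refine DifferentiableOn.hasFPowerSeriesOnBall (hf.mono ?_) hρ0
    intro w hw
    rw [mem_closedBall_zero_iff] at hw
    rw [mem_ball_zero_iff]
    rw [hρR] at hw; linarith
  set p := cauchyPowerSeries f 0 ρ with hp
  set r : ℝ≥0 := (5 * R / 8).toNNReal with hrdef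
  have hrR : (r : ℝ) = 5 * R / 8 := Real.coe_toNNReal _ (by linarith)
  have hrρ : (r : ℝ≥0∞) < p.radius := by
    refine lt_of_lt_of_le ?_ hps.r_le
    rw [ENNReal.coe_lt_coe, ← NNReal.coe_lt_coe, hρR, hrR]; linarith
  have hsum : Summable fun n : ℕ => ‖p n‖ * (r : ℝ) ^ n := p.summable_norm_mul_pow hrρ
  refine ⟨fun z => ∑' n : ℕ, (p.coeff n / (n + 1)) * z ^ (n + 1), ?_⟩
  intro z hz
  rw [mem_ball_zero_iff] at hz
  have hzr : z ∈ ball (0 : ℂ) (r : ℝ) := by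
    rw [mem_ball_zero_iff, hrR]; linarith
  have key := hasDerivAt_tsum_of_isPreconnected hsum (isOpen_ball (x := (0:ℂ)) (ε := (r : ℝ)))
    (convex_ball (0:ℂ) (r : ℝ)).isPreconnected
    (g := fun n w => (p.coeff n / (n + 1)) * w ^ (n + 1))
    (g' := fun n w => p.coeff n * w ^ n)
    ?_ ?_ (y₀ := 0) (mem_ball_self (show (0:ℝ) < (r:ℝ) by rw [hrR]; linarith)) ?_ hzr
  · refine key.congr_deriv ?_
    have hzρ : z ∈ Metric.eball (0 : ℂ) (ρ : ℝ≥0∞) := by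
      rw [Metric.mem_eball, edist_zero_right]
      exact ENNReal.coe_lt_coe.mpr (by rw [← NNReal.coe_lt_coe, coe_nnnorm, hρR]; linarith)
    have hs := hps.hasSum (y := z) (by simpa using hzρ)
    have heq : (fun n : ℕ => p n fun _ => z) = fun n : ℕ => p.coeff n * z ^ n := by
      funext n
      rw [p.apply_eq_pow_smul_coeff, smul_eq_mul, mul_comm]
    rw [heq] at hs
    simpa using hs.tsum_eq
  · intro n w _
    have h1 : HasDerivAt (fun w : ℂ => w ^ (n + 1)) ((n + 1 : ℕ) * w ^ n) w := by
      simpa using hasDerivAt_pow (n + 1) w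
    have h2 := h1.const_mul (p.coeff n / (n + 1))
    refine h2.congr_deriv ?_
    have hne : ((n : ℂ) + 1) ≠ 0 := Nat.cast_add_one_ne_zero n
    push_cast
    field_simp
  · intro n w hw
    rw [mem_ball_zero_iff] at hw
    calc ‖p.coeff n * w ^ n‖ = ‖p.coeff n‖ * ‖w‖ ^ n := by rw [norm_mul, norm_pow]
      _ ≤ ‖p n‖ * (r : ℝ) ^ n := by
          refine mul_le_mul ?_ (pow_le_pow_left₀ (norm_nonneg w) hw.le n)
            (pow_nonneg (norm_nonneg w) n) (norm_nonneg _)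
          rw [p.norm_apply_eq_norm_coef]
  · refine summable_of_ne_finset_zero (s := ∅) fun n _ => by simp

/-- Holomorphic logarithm on (half of) a ball, normalized at `0`. -/
lemma exists_log {R : ℝ} (hR : 0 < R) {f : ℂ → ℂ}
    (hf : DifferentiableOn ℂ f (ball (0 : ℂ) R))
    (hne : ∀ z ∈ ball (0 : ℂ) R, f z ≠ 0) :
    ∃ φ : ℂ → ℂ, (∀ z ∈ ball (0 : ℂ) (R / 2), HasDerivAt φ (deriv f z / f z) z) ∧
      (∀ z ∈ ball (0 : ℂ) (R / 2), Complex.exp (φ z) = f z) ∧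
      φ 0 = Complex.log (f 0) := by
  have hderiv : DifferentiableOn ℂ (deriv f) (ball (0 : ℂ) R) := by
    exact ((hf.analyticOnNhd isOpen_ball).deriv).differentiableOn
  have hq : DifferentiableOn ℂ (fun z => deriv f z / f z) (ball (0 : ℂ) R) :=
    hderiv.div hf hne
  obtain ⟨F, hF⟩ := exists_primitive hR hq
  set φ : ℂ → ℂ := fun z => F z - F 0 + Complex.log (f 0) with hφ
  have h0ball : (0 : ℂ) ∈ ball (0 : ℂ) (R / 2) := mem_ball_self (by linarith)
  have hφder : ∀ z ∈ ball (0 : ℂ) (R / 2), HasDerivAt φ (deriv f z / f z) z := by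
    intro z hz
    simpa [hφ] using ((hF z hz).sub_const (F 0)).add_const (Complex.log (f 0))
  have hsub : ball (0 : ℂ) (R / 2) ⊆ ball (0 : ℂ) R := ball_subset_ball (by linarith)
  have hAt : ∀ z ∈ ball (0 : ℂ) (R / 2), DifferentiableAt ℂ f z := fun z hz =>
    hf.differentiableAt (isOpen_ball.mem_nhds (hsub hz))
  have hconst : ∀ z ∈ ball (0 : ℂ) (R / 2), f z * Complex.exp (-φ z) = 1 := by
    have hd : ∀ z ∈ ball (0 : ℂ) (R / 2),
        HasDerivAt (fun w => f w * Complex.exp (-φ w)) 0 z := by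
      intro z hz
      have h1 : HasDerivAt f (deriv f z) z := (hAt z hz).hasDerivAt
      have h2 : HasDerivAt (fun w => Complex.exp (-φ w))
          (Complex.exp (-φ z) * -(deriv f z / f z)) z := by
        have := ((hφder z hz).neg).cexp
        simpa [mul_comm] using this
      have h3 := h1.mul h2
      refine h3.congr_deriv ?_
      have hfz : f z ≠ 0 := hne z (hsub hz)
      have hfd : f z * (deriv f z / f z) = deriv f z := mul_div_cancel₀ _ hfz
      linear_combination -(Complex.exp (-φ z)) * hfd
    intro z hz
    have := mvt (convex_ball (0 : ℂ) (R / 2)) _ (fun _ => 0) hd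
      (C := 0) (fun _ _ => by simp) hz h0ball
    have heq : f z * Complex.exp (-φ z) = f 0 * Complex.exp (-φ 0) := by
      have := this
      simp only [zero_mul] at this
      exact sub_eq_zero.mp (norm_le_zero_iff.mp this)
    rw [heq]
    have hf0 : f 0 ≠ 0 := hne 0 (mem_ball_self hR)
    rw [hφ]
    simp only [sub_self, zero_add]
    rw [Complex.exp_neg, Complex.exp_log hf0]
    field_simp
  refine ⟨φ, hφder, ?_, by simp [hφ]⟩
  intro z hz
  have h := hconst z hz
  have hez : Complex.exp (-φ z) ≠ 0 := Complex.exp_ne_zero _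
  field_simp [Complex.exp_neg] at h
  rw [Complex.exp_neg, ← div_eq_mul_inv, div_eq_one_iff_eq (Complex.exp_ne_zero _)] at h
  exact h.symm

/-- If `g` is large on a sphere around `a` compared to its center value, its image covers a
ball around `g a`. -/
lemma landau {g : ℂ → ℂ} {a : ℂ} {ρ s m : ℝ} (hs0 : 0 < s) (hsρ : s < ρ)
    (hg : DifferentiableOn ℂ g (ball a ρ)) (hm : 0 < m)
    (hlow : ∀ z ∈ sphere a s, m ≤ ‖g z - g a‖) :
    ∀ w : ℂ, ‖w - g a‖ < m / 2 → ∃ z ∈ ball a s, g z = w := by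
  intro w hw
  by_contra hcon
  push_neg at hcon
  have hballs : ball a s ⊆ ball a ρ := ball_subset_ball hsρ.le
  have hcb : closedBall a s ⊆ ball a ρ := closedBall_subset_ball hsρ
  have hnev : ∀ z ∈ ball a s, g z - w ≠ 0 := fun z hz => sub_ne_zero.mpr (hcon z hz)
  have hsphere : ∀ z ∈ sphere a s, m / 2 ≤ ‖g z - w‖ := by
    intro z hz
    have h1 := hlow z hz
    calc m / 2 = m - m / 2 := by ring
      _ ≤ ‖g z - g a‖ - ‖w - g a‖ := by linarith
      _ ≤ ‖g z - w‖ := by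
          have := norm_sub_sub_norm_sub_le_norm_sub (g z) w (g a)
          have h2 : ‖g z - g a‖ - ‖g z - w‖ ≤ ‖w - g a‖ := by
            have := norm_sub_norm_le (g z - g a) (g z - w)
            calc ‖g z - g a‖ - ‖g z - w‖ ≤ ‖(g z - g a) - (g z - w)‖ := this
              _ = ‖w - g a‖ := by ring_nf
          linarith
  set q : ℂ → ℂ := fun z => (g z - w)⁻¹ with hq
  have hqd : DiffContOnCl ℂ q (ball a s) := by
    constructor
    · exact ((hg.mono hballs).sub_const w).inv hnev
    · rw [closure_ball a hs0.ne']
      refine ((hg.continuousOn.mono hcb).sub continuousOn_const).inv₀ ?_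
      intro z hz
      rcases eq_or_lt_of_le (mem_closedBall.mp hz) with h | h
      · have : z ∈ sphere a s := mem_sphere.mpr h
        have := hsphere z this
        intro h0
        simp only [Pi.sub_apply] at h0
        rw [h0] at this
        simp at this
        linarith
      · exact hnev z (mem_ball.mpr h)
  have hfr : ∀ z ∈ frontier (ball a s), ‖q z‖ ≤ (m / 2)⁻¹ := by
    intro z hz
    rw [frontier_ball a hs0.ne'] at hz
    have := hsphere z hz
    rw [hq]
    simp only [norm_inv]
    exact inv_anti₀ (by linarith) this
  have hmem : a ∈ closure (ball a s) := subset_closure (mem_ball_self hs0)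
  have hbound := Complex.norm_le_of_forall_mem_frontier_norm_le isBounded_ball hqd hfr hmem
  have haw : g a - w ≠ 0 := hnev a (mem_ball_self hs0)
  rw [hq] at hbound
  simp only [norm_inv] at hbound
  have h1 : 0 < ‖g a - w‖ := norm_pos_iff.mpr haw
  have h2 : ‖g a - w‖ < m / 2 := by rwa [norm_sub_rev]
  have h3 : (m / 2)⁻¹ < ‖g a - w‖⁻¹ := by
    apply inv_strictAnti₀ h1 h2
  linarith

/-- Bloch-type theorem: the image of a disk contains a ball of radius comparable to the
derivative at the center. -/
lemma bloch {u : ℂ → ℂ} {c : ℂ} {R : ℝ} (hR : 0 < R)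
    (hu : DifferentiableOn ℂ u (ball c (2 * R))) :
    ∃ v : ℂ, ∀ w : ℂ, ‖w - v‖ < R * ‖deriv u c‖ / 64 → ∃ z ∈ ball c (2 * R), u z = w := by
  have hA : AnalyticOnNhd ℂ u (ball c (2 * R)) := hu.analyticOnNhd isOpen_ball
  have hsubR : closedBall c R ⊆ ball c (2 * R) := by
    refine closedBall_subset_ball (by linarith)
  have hdcont : ContinuousOn (deriv u) (closedBall c R) :=
    ((hA.deriv).continuousOn).mono hsubR
  set h : ℂ → ℝ := fun z => (R - dist z c) * ‖deriv u z‖ with hh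
  have hcont : ContinuousOn h (closedBall c R) := by
    refine ContinuousOn.mul ?_ hdcont.norm
    exact (continuous_const.sub (continuous_id.dist continuous_const)).continuousOn
  obtain ⟨p, hp, hmax⟩ := (isCompact_closedBall c R).exists_isMaxOn
    ⟨c, mem_closedBall_self hR.le⟩ hcont
  set K := h p with hK
  have hKc : R * ‖deriv u c‖ ≤ K := by
    have := hmax (mem_closedBall_self hR.le)
    simpa [hh, dist_self] using this
  rcases le_or_gt K 0 with hK0 | hK0
  · refine ⟨0, fun w hw => absurd hw (not_lt.mpr ?_)⟩
    have : R * ‖deriv u c‖ / 64 ≤ 0 := by linarith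
    exact le_trans this (norm_nonneg _)
  -- main case
  have hpc : dist p c < R := by
    by_contra hcon
    push_neg at hcon
    have h1 : R - dist p c ≤ 0 := by linarith
    have : K ≤ 0 := mul_nonpos_of_nonpos_of_nonneg h1 (norm_nonneg _)
    linarith
  set ρ : ℝ := (R - dist p c) / 2 with hρ
  have hρ0 : 0 < ρ := by simp only [hρ]; linarith
  have hup : ‖deriv u p‖ * (2 * ρ) = K := by
    rw [hK, hh, hρ]; ring
  have hballρ : ball p ρ ⊆ closedBall c R := by
    intro z hz
    rw [mem_ball] at hz
    rw [mem_closedBall]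
    calc dist z c ≤ dist z p + dist p c := dist_triangle z p c
      _ ≤ ρ + dist p c := by linarith
      _ ≤ R := by rw [hρ]; linarith
  have hball2R : ball p ρ ⊆ ball c (2 * R) := fun z hz => hsubR (hballρ hz)
  have hbound : ∀ z ∈ ball p ρ, ‖deriv u z‖ ≤ K / ρ := by
    intro z hz
    have hzc : dist z c < R - ρ := by
      have := mem_ball.mp hz
      calc dist z c ≤ dist z p + dist p c := dist_triangle z p c
        _ < ρ + dist p c := by linarith
        _ = R - ρ := by rw [hρ]; ring
    have h1 : h z ≤ K := hmax (hballρ hz)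
    have h2 : ρ * ‖deriv u z‖ ≤ (R - dist z c) * ‖deriv u z‖ := by
      apply mul_le_mul_of_nonneg_right (by linarith) (norm_nonneg _)
    rw [hh] at h1
    rw [le_div_iff₀ hρ0]
    calc ‖deriv u z‖ * ρ = ρ * ‖deriv u z‖ := by ring
      _ ≤ (R - dist z c) * ‖deriv u z‖ := h2
      _ ≤ K := h1
  have hdd : DifferentiableOn ℂ (deriv u) (ball p ρ) :=
    ((hA.deriv).differentiableOn).mono hball2R
  have hmaps : MapsTo (deriv u) (ball p ρ) (ball (deriv u p) (2 * K / ρ)) := by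
    intro z hz
    rw [mem_ball, dist_eq_norm]
    have h1 : ‖deriv u z‖ ≤ K / ρ := hbound z hz
    have h2 : ‖deriv u p‖ = K / (2 * ρ) := by
      field_simp at hup ⊢
      linarith
    calc ‖deriv u z - deriv u p‖ ≤ ‖deriv u z‖ + ‖deriv u p‖ := norm_sub_le _ _
      _ ≤ K / ρ + K / (2 * ρ) := by rw [h2]; linarith
      _ < 2 * K / ρ := by
          rw [div_add_div _ _ hρ0.ne' (by positivity : (2 * ρ) ≠ 0)]
          rw [div_lt_div_iff₀ (by positivity) hρ0]
          nlinarith [mul_pos hK0 (mul_pos hρ0 hρ0)]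
  have hschwarz : ∀ z ∈ ball p ρ, ‖deriv u z - deriv u p‖ ≤ 2 * K / ρ / ρ * ‖z - p‖ := by
    intro z hz
    have := Complex.dist_le_div_mul_dist_of_mapsTo_ball hdd (hmaps.mono_right ball_subset_closedBall) hz
    rwa [dist_eq_norm, dist_eq_norm] at this
  -- mean value estimate on the small ball
  set s₀ : ℝ := ρ / 8 with hs₀
  have hs₀0 : 0 < s₀ := by positivity
  have hcbs : closedBall p s₀ ⊆ ball p ρ := closedBall_subset_ball (by rw [hs₀]; linarith)
  have hG : ∀ z ∈ closedBall p s₀,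
      HasDerivAt (fun z => u z - deriv u p * z) (deriv u z - deriv u p) z := by
    intro z hz
    have h1 : HasDerivAt u (deriv u z) z :=
      (hu.differentiableAt (isOpen_ball.mem_nhds (hball2R (hcbs hz)))).hasDerivAt
    have := h1.sub ((hasDerivAt_id z).const_mul (deriv u p))
    simp only [mul_one] at this
    exact this
  have hGb : ∀ z ∈ closedBall p s₀, ‖deriv u z - deriv u p‖ ≤ K / (4 * ρ) := by
    intro z hz
    have h1 := hschwarz z (hcbs hz)
    have h2 : ‖z - p‖ ≤ s₀ := by rwa [← dist_eq_norm, ← mem_closedBall]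
    calc ‖deriv u z - deriv u p‖ ≤ 2 * K / ρ / ρ * ‖z - p‖ := h1
      _ ≤ 2 * K / ρ / ρ * s₀ := by
          apply mul_le_mul_of_nonneg_left h2 (by positivity)
      _ = K / (4 * ρ) := by rw [hs₀]; field_simp; ring
  have hMVT := fun z (hz : z ∈ closedBall p s₀) =>
    mvt (convex_closedBall p s₀) _ _ hG hGb hz (mem_closedBall_self hs₀0.le)
  have hlow : ∀ z ∈ sphere p s₀, K / 32 ≤ ‖u z - u p‖ := by
    intro z hz
    have hzc : z ∈ closedBall p s₀ := sphere_subset_closedBall hz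
    have h1 := hMVT z hzc
    have hzp : ‖z - p‖ = s₀ := by rw [← dist_eq_norm]; exact mem_sphere.mp hz
    have h2 : ‖(u z - deriv u p * z) - (u p - deriv u p * p)‖ ≤ K / (4 * ρ) * s₀ := by
      rw [← hzp]; exact h1
    have h3 : ‖deriv u p * (z - p)‖ = K / (2 * ρ) * s₀ := by
      rw [norm_mul, hzp]
      congr 1
      field_simp at hup ⊢
      linarith
    have h4 : ‖u z - u p‖ ≥ ‖deriv u p * (z - p)‖ - ‖(u z - deriv u p * z) - (u p - deriv u p * p)‖ := by
      have : deriv u p * (z - p) = (u z - u p) - ((u z - deriv u p * z) - (u p - deriv u p * p)) := by ring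
      rw [this]
      have := norm_sub_le (u z - u p) ((u z - deriv u p * z) - (u p - deriv u p * p))
      linarith [norm_sub_le ((u z - u p) - ((u z - deriv u p * z) - (u p - deriv u p * p))) 0]
    have h5 : K / (2 * ρ) * s₀ - K / (4 * ρ) * s₀ = K / 32 := by
      rw [hs₀]; field_simp; ring
    linarith
  have hld := landau hs₀0 (by rw [hs₀]; linarith : s₀ < ρ) (hu.mono hball2R)
    (by positivity : (0:ℝ) < K / 32) hlow
  refine ⟨u p, fun w hw => ?_⟩
  have hw' : ‖w - u p‖ < K / 32 / 2 := by
    have : R * ‖deriv u c‖ / 64 ≤ K / 64 := by linarith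
    calc ‖w - u p‖ < R * ‖deriv u c‖ / 64 := hw
      _ ≤ K / 64 := this
      _ = K / 32 / 2 := by ring
  obtain ⟨z, hz, hzw⟩ := hld w hw'
  exact ⟨z, hball2R (ball_subset_ball (by rw [hs₀]; linarith) hz), hzw⟩

/-- The real parts of the avoided grid. -/
noncomputable def tg (n : ℕ) : ℝ := Real.log (Real.sqrt (n + 1) + Real.sqrt n)

/-- The avoided grid. -/
def grid : Set ℂ := {s | ∃ (n : ℕ) (m : ℤ), (s.re = tg n ∨ s.re = - tg n) ∧ s.im = m * π}

lemma sqrt_add_pos (n : ℕ) : 0 < Real.sqrt (n + 1) + Real.sqrt n := by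
  have h1 : 0 < Real.sqrt (n + 1) := Real.sqrt_pos.mpr (by positivity)
  have h2 : 0 ≤ Real.sqrt n := Real.sqrt_nonneg _
  linarith

lemma tg_zero : tg 0 = 0 := by simp [tg]

lemma tg_nonneg (n : ℕ) : 0 ≤ tg n := by
  refine Real.log_nonneg ?_
  have h1 : 1 ≤ Real.sqrt (n + 1) := by
    have h := Real.sqrt_le_sqrt (show (1:ℝ) ≤ (n:ℝ) + 1 by linarith [Nat.cast_nonneg (α := ℝ) n])
    simpa [Real.sqrt_one] using h
  linarith [Real.sqrt_nonneg (n : ℝ)]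

lemma tg_gap (n : ℕ) : tg (n + 1) ≤ tg n + 1 := by
  have hA := sqrt_add_pos n
  have hB := sqrt_add_pos (n + 1)
  have hs2 : Real.sqrt 2 ≤ 1.5 := by
    nlinarith [Real.sq_sqrt (show (0:ℝ) ≤ 2 by norm_num), Real.sqrt_nonneg 2]
  have he : (2.7 : ℝ) ≤ Real.exp 1 := by
    have := Real.exp_one_gt_d9
    linarith
  have hkey : Real.sqrt (n + 1 + 1) + Real.sqrt (n + 1) ≤
      (Real.sqrt (n + 1) + Real.sqrt n) * Real.exp 1 := by
    have h1 : Real.sqrt (n + 1 + 1) ≤ Real.sqrt 2 * Real.sqrt (n + 1) := by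
      rw [← Real.sqrt_mul (by norm_num)]
      exact Real.sqrt_le_sqrt (by push_cast; linarith)
    have h2 : Real.sqrt 2 * Real.sqrt (n+1) ≤ 1.5 * Real.sqrt (n+1) := by
      apply mul_le_mul_of_nonneg_right hs2 (Real.sqrt_nonneg _)
    have h3 : Real.sqrt (n+1+1) + Real.sqrt (n+1) ≤ 2.5 * Real.sqrt (n+1) := by linarith
    have h4 : (2.5 : ℝ) * Real.sqrt (n+1) ≤ (Real.sqrt (n+1) + Real.sqrt n) * 2.7 := by
      nlinarith [Real.sqrt_nonneg (n:ℝ), Real.sqrt_nonneg ((n:ℝ)+1)]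
    nlinarith [Real.sqrt_nonneg ((n:ℝ)+1), Real.sqrt_nonneg (n:ℝ)]
  have := Real.log_le_log (by positivity) hkey
  rw [Real.log_mul (by positivity) (Real.exp_ne_zero 1), Real.log_exp] at this
  unfold tg
  convert this using 3 <;> push_cast <;> ring

lemma tg_above (x : ℝ) : ∃ n : ℕ, x < tg n := by
  obtain ⟨n, hn⟩ := exists_nat_gt ((Real.exp x) ^ 2)
  refine ⟨n, ?_⟩
  have h1 : Real.exp x < Real.sqrt (n + 1) := by
    rw [show Real.exp x = Real.sqrt ((Real.exp x) ^ 2) by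
      rw [Real.sqrt_sq (Real.exp_pos x).le]]
    apply Real.sqrt_lt_sqrt (by positivity)
    linarith
  have h2 : Real.exp x < Real.sqrt (n + 1) + Real.sqrt n := by
    linarith [Real.sqrt_nonneg (n : ℝ)]
  unfold tg
  calc x = Real.log (Real.exp x) := (Real.log_exp x).symm
    _ < Real.log (Real.sqrt (n+1) + Real.sqrt n) := by
        apply Real.log_lt_log (Real.exp_pos x) h2

/-- The grid is a `4`-net of the plane. -/
lemma grid_net (v : ℂ) : ∃ s ∈ grid, ‖v - s‖ ≤ 4 := by
  set m : ℤ := round (v.im / π) with hm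
  have hπ : (0:ℝ) < π := Real.pi_pos
  have him : |v.im - m * π| ≤ π / 2 := by
    have h1 : |v.im / π - m| ≤ 1 / 2 := by
      rw [hm]; exact abs_sub_round _
    have h2 : |v.im - m * π| = |v.im / π - m| * π := by
      rw [show |v.im / π - m| * π = |v.im / π - m| * |π| from by rw [abs_of_pos hπ],
        ← abs_mul]
      congr 1
      field_simp
    rw [h2]
    calc |v.im / π - m| * π ≤ 1/2 * π := by
          apply mul_le_mul_of_nonneg_right h1 hπ.le
      _ = π / 2 := by ring
  set x : ℝ := |v.re| with hx
  have hx0 : 0 ≤ x := abs_nonneg _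
  have hex : ∃ n : ℕ, x < tg n := tg_above x
  classical
  set N : ℕ := Nat.find hex with hN
  have hNspec : x < tg N := Nat.find_spec hex
  have hN0 : N ≠ 0 := by
    intro h0
    rw [h0, tg_zero] at hNspec
    linarith
  obtain ⟨n₀, hn₀⟩ := Nat.exists_eq_succ_of_ne_zero hN0
  have hlow : tg n₀ ≤ x := by
    by_contra hcon
    push_neg at hcon
    exact Nat.find_min hex (by omega : n₀ < N) hcon
  have hclose : x - tg n₀ ≤ 1 := by
    have := tg_gap n₀
    rw [hn₀] at hNspec
    linarith
  -- choose the sign of the real part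
  rcases le_or_gt 0 v.re with hre | hre
  · refine ⟨⟨tg n₀, m * π⟩, ⟨n₀, m, Or.inl rfl, rfl⟩, ?_⟩
    have h1 : |v.re - tg n₀| ≤ 1 := by
      rw [abs_le]
      constructor
      · have : x = v.re := abs_of_nonneg hre
        rw [this] at hclose; linarith
      · have : x = v.re := abs_of_nonneg hre
        rw [this] at hlow; linarith [tg_nonneg n₀]
    calc ‖v - ⟨tg n₀, m * π⟩‖ ≤ |(v - ⟨tg n₀, m * π⟩).re| + |(v - ⟨tg n₀, m * π⟩).im| :=
          Complex.norm_le_abs_re_add_abs_im _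
      _ = |v.re - tg n₀| + |v.im - m * π| := rfl
      _ ≤ 1 + π / 2 := add_le_add h1 him
      _ ≤ 4 := by
          have : π ≤ 4 := by linarith [Real.pi_le_four]
          linarith
  · refine ⟨⟨- tg n₀, m * π⟩, ⟨n₀, m, Or.inr rfl, rfl⟩, ?_⟩
    have hxre : x = - v.re := abs_of_neg hre
    have h1 : |v.re - (- tg n₀)| ≤ 1 := by
      rw [abs_le]
      constructor
      · rw [hxre] at hlow; linarith [tg_nonneg n₀]
      · rw [hxre] at hclose; linarith
    calc ‖v - ⟨- tg n₀, m * π⟩‖ ≤ |(v - ⟨- tg n₀, m * π⟩).re| + |(v - ⟨- tg n₀, m * π⟩).im| :=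
          Complex.norm_le_abs_re_add_abs_im _
      _ = |v.re - (- tg n₀)| + |v.im - m * π| := rfl
      _ ≤ 1 + π / 2 := add_le_add h1 him
      _ ≤ 4 := by
          have : π ≤ 4 := by linarith [Real.pi_le_four]
          linarith

/-- Values of `exp` on the grid. -/
lemma exp_grid {s : ℂ} (hs : s ∈ grid) :
    ∃ (n : ℕ) (ε : ℂ), ε * ε = 1 ∧
      Complex.exp s + (Complex.exp s)⁻¹ = ε * (2 * Real.sqrt (n + 1)) := by
  obtain ⟨n, m, h1, h2⟩ := hs
  set A : ℝ := Real.sqrt (n + 1) + Real.sqrt n with hA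
  have hA0 : 0 < A := sqrt_add_pos n
  have hAinv : A⁻¹ = Real.sqrt (n + 1) - Real.sqrt n := by
    have hmul : A * (Real.sqrt (n + 1) - Real.sqrt n) = 1 := by
      rw [hA]
      have h3 : Real.sqrt (n+1) * Real.sqrt (n+1) = (n:ℝ) + 1 :=
        Real.mul_self_sqrt (by positivity)
      have h4 : Real.sqrt n * Real.sqrt n = (n:ℝ) := Real.mul_self_sqrt (Nat.cast_nonneg n)
      nlinarith
    exact inv_eq_of_mul_eq_one_right hmul
  set E : ℝ := Real.exp s.re with hE
  have hE0 : 0 < E := Real.exp_pos _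
  have hEA : E + E⁻¹ = 2 * Real.sqrt (n + 1) := by
    rcases h1 with h | h
    · have : E = A := by rw [hE, h, tg, Real.exp_log hA0]
      rw [this, hAinv, hA]; ring
    · have : E = A⁻¹ := by rw [hE, h, tg, Real.exp_neg, Real.exp_log hA0]
      rw [this, inv_inv, hAinv, hA]; ring
  set ε : ℂ := (-1 : ℂ) ^ m with hε
  have hεsq : ε * ε = 1 := by
    rw [hε, ← zpow_add₀ (by norm_num : (-1:ℂ) ≠ 0)]
    have : m + m = 2 * m := by ring
    rw [this, zpow_mul]
    norm_num
  have hεinv : ε⁻¹ = ε := by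
    rw [inv_eq_iff_eq_inv, eq_comm, inv_eq_of_mul_eq_one_right hεsq]
  have hexp : Complex.exp s = ε * E := by
    have hs' : s = (s.re : ℂ) + (s.im : ℂ) * I := (Complex.re_add_im s).symm
    rw [hs', Complex.exp_add, h2]
    have : ((m * π : ℝ) : ℂ) * I = m * (π * I) := by push_cast; ring
    rw [this, Complex.exp_int_mul, Complex.exp_pi_mul_I]
    rw [← Complex.ofReal_exp]
    rw [hε]; ring
  refine ⟨n, ε, hεsq, ?_⟩
  rw [hexp, mul_inv, hεinv]
  have hcast : ((2 * Real.sqrt (n + 1) : ℝ) : ℂ) = 2 * (Real.sqrt (n+1) : ℂ) := by push_cast; ring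
  rw [show (2 : ℂ) * (Real.sqrt (n+1) : ℝ) = ((2 * Real.sqrt (n+1) : ℝ) : ℂ) from by push_cast; ring,
    ← hEA]
  push_cast
  ring

/-- Auxiliary: `|log x| ≤ log c` when `c⁻¹ ≤ x ≤ c`. -/
lemma abs_log_le {x c : ℝ} (hc : 1 ≤ c) (h1 : c⁻¹ ≤ x) (h2 : x ≤ c) :
    |Real.log x| ≤ Real.log c := by
  have hc0 : 0 < c := by linarith
  have hx0 : 0 < x := lt_of_lt_of_le (by positivity) h1
  rcases le_or_gt 1 x with h | h
  · rw [_root_.abs_of_nonneg (Real.log_nonneg h)]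
    exact Real.log_le_log hx0 h2
  · rw [_root_.abs_of_neg (Real.log_neg hx0 h)]
    rw [← Real.log_inv]
    refine Real.log_le_log (by positivity) ?_
    exact (inv_le_comm₀ hc0 hx0).mp h1

/-- Norm bound for the principal logarithm. -/
lemma norm_log_le {ζ : ℂ} : ‖Complex.log ζ‖ ≤ |Real.log (‖ζ‖)| + π := by
  calc ‖Complex.log ζ‖ ≤ |(Complex.log ζ).re| + |(Complex.log ζ).im| :=
        Complex.norm_le_abs_re_add_abs_im _
    _ ≤ |Real.log (‖ζ‖)| + π := by
        rw [Complex.log_re, Complex.log_im]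
        exact add_le_add le_rfl (Complex.abs_arg_le_pi ζ)

/-- **Schottky's theorem** (crude version, with normalization `1/2 ≤ ‖g 0‖`). -/
lemma schottky_core (M : ℝ) (hM : 1 ≤ M) : ∃ C : ℝ, ∀ g : ℂ → ℂ,
    DifferentiableOn ℂ g (ball (0:ℂ) 100) → (∀ z ∈ ball (0:ℂ) 100, g z ≠ 0) →
    (∀ z ∈ ball (0:ℂ) 100, g z ≠ 1) → 1/2 ≤ ‖g 0‖ → ‖g 0‖ ≤ M →
    ∀ z ∈ closedBall (0:ℂ) 4, ‖g z‖ ≤ C := by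
  have hπ : (0:ℝ) < π := Real.pi_pos
  set A : ℝ := (Real.log (2*M) + π) / (2*π) + 1 with hA
  have hA1 : 1 ≤ A := by
    have h1 : 0 ≤ Real.log (2*M) := Real.log_nonneg (by linarith)
    have h2 : 0 ≤ (Real.log (2*M) + π) / (2*π) := by positivity
    show (1:ℝ) ≤ (Real.log (2*M) + π) / (2*π) + 1
    linarith
  set c₂ : ℝ := 2*A + 3 with hc₂
  have hc₂1 : 1 ≤ c₂ := by linarith
  set W : ℝ := Real.log c₂ + π + 256 with hW
  have hW0 : 0 ≤ W := by
    have := Real.log_nonneg hc₂1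
    linarith
  refine ⟨Real.exp (2*π*Real.exp (W + W)), ?_⟩
  intro g hg hg0 hg1 hglow hgup
  -- logarithm of g on ball 0 50
  obtain ⟨φ, hφd, hφe, hφ0⟩ := exists_log (by norm_num : (0:ℝ) < 100) hg hg0
  rw [show (100:ℝ)/2 = 50 by norm_num] at hφd hφe
  have h2πI : (2*(π:ℂ)*I) ≠ 0 := by
    simp [Real.pi_ne_zero, Complex.I_ne_zero, Complex.ofReal_ne_zero]
  set a : ℂ → ℂ := fun z => φ z / (2*(π:ℂ)*I) with ha
  have hsub50 : ball (0:ℂ) 50 ⊆ ball 0 100 := ball_subset_ball (by norm_num)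
  have had : DifferentiableOn ℂ a (ball (0:ℂ) 50) := by
    intro z hz
    exact ((hφd z hz).differentiableAt.div_const _).differentiableWithinAt
  have haint : ∀ z ∈ ball (0:ℂ) 50, ∀ k : ℤ, a z ≠ (k:ℂ) := by
    intro z hz k hak
    have hφz : φ z = (k:ℂ) * (2*(π:ℂ)*I) := by
      rw [ha] at hak
      field_simp at hak
      rw [hak]; ring
    have : g z = 1 := by
      rw [← hφe z hz, hφz]
      exact_mod_cast Complex.exp_int_mul_two_pi_mul_I k
    exact hg1 z (hsub50 hz) this
  have ha0 : ∀ z ∈ ball (0:ℂ) 50, a z ≠ 0 := by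
    intro z hz h
    exact haint z hz 0 (by simpa using h)
  have ha1 : ∀ z ∈ ball (0:ℂ) 50, a z - 1 ≠ 0 := by
    intro z hz h
    exact haint z hz 1 (by rw [sub_eq_zero] at h; simpa using h)
  -- square roots
  obtain ⟨la, hlad, hlae, hla0⟩ := exists_log (by norm_num : (0:ℝ) < 50) had ha0
  obtain ⟨lb, hlbd, hlbe, hlb0⟩ := exists_log (by norm_num : (0:ℝ) < 50)
    (had.sub_const 1) ha1
  rw [show (50:ℝ)/2 = 25 by norm_num] at hlad hlae hlbd hlbe
  set sa : ℂ → ℂ := fun z => Complex.exp (la z / 2) with hsa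
  set sb : ℂ → ℂ := fun z => Complex.exp (lb z / 2) with hsb
  have hsub25 : ball (0:ℂ) 25 ⊆ ball 0 50 := ball_subset_ball (by norm_num)
  have hsa2 : ∀ z ∈ ball (0:ℂ) 25, sa z * sa z = a z := by
    intro z hz
    rw [hsa, ← Complex.exp_add, show la z/2 + la z/2 = la z by ring, hlae z hz]
  have hsb2 : ∀ z ∈ ball (0:ℂ) 25, sb z * sb z = a z - 1 := by
    intro z hz
    rw [hsb, ← Complex.exp_add, show lb z/2 + lb z/2 = lb z by ring, hlbe z hz]
  set b : ℂ → ℂ := fun z => sa z - sb z with hb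
  have hbd : DifferentiableOn ℂ b (ball (0:ℂ) 25) := by
    intro z hz
    have d1 : DifferentiableAt ℂ sa z := ((hlad z hz).differentiableAt.div_const 2).cexp
    have d2 : DifferentiableAt ℂ sb z := ((hlbd z hz).differentiableAt.div_const 2).cexp
    exact (d1.sub d2).differentiableWithinAt
  have hbne : ∀ z ∈ ball (0:ℂ) 25, b z ≠ 0 := by
    intro z hz h
    rw [hb, sub_eq_zero] at h
    have h1 := hsa2 z hz
    have h2 := hsb2 z hz
    rw [h] at h1
    have h3 : a z = a z - 1 := h1.symm.trans h2
    have h4 : (0:ℂ) = -1 := by linear_combination h3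
    exact absurd h4 (by norm_num)
  have hbinv : ∀ z ∈ ball (0:ℂ) 25, sa z + sb z = (b z)⁻¹ := by
    intro z hz
    have hmul : b z * (sa z + sb z) = 1 := by
      rw [hb]
      have := hsa2 z hz
      have := hsb2 z hz
      calc (sa z - sb z) * (sa z + sb z) = sa z * sa z - sb z * sb z := by ring
        _ = a z - (a z - 1) := by rw [hsa2 z hz, hsb2 z hz]
        _ = 1 := by ring
    exact (inv_eq_of_mul_eq_one_right hmul).symm
  have hsasum : ∀ z ∈ ball (0:ℂ) 25, sa z = (b z + (b z)⁻¹) / 2 := by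
    intro z hz
    rw [← hbinv z hz, hb]
    ring
  -- logarithm of b
  obtain ⟨w, hwd, hwe, hw0⟩ := exists_log (by norm_num : (0:ℝ) < 25) hbd hbne
  rw [show (25:ℝ)/2 = 12.5 by norm_num] at hwd hwe
  have hsub125 : ball (0:ℂ) 12.5 ⊆ ball 0 25 := ball_subset_ball (by norm_num)
  -- avoidance of the grid
  have havoid : ∀ z ∈ ball (0:ℂ) 12.5, w z ∉ grid := by
    intro z hz hgrid
    obtain ⟨n, ε, hε, hsum⟩ := exp_grid hgrid
    have hz25 : z ∈ ball (0:ℂ) 25 := hsub125 hz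
    have hbz : Complex.exp (w z) = b z := hwe z hz
    have hsaz : sa z = ε * Real.sqrt (n+1) := by
      rw [hsasum z hz25, ← hbz, hsum]
      ring
    have haz : a z = ((n:ℂ) + 1) := by
      rw [← hsa2 z hz25, hsaz]
      have h1 : ((Real.sqrt (n+1) : ℂ)) * ((Real.sqrt (n+1) : ℂ)) = ((n:ℂ) + 1) := by
        rw [← Complex.ofReal_mul, Real.mul_self_sqrt (by positivity)]
        push_cast; ring
      calc ε * Real.sqrt (n+1) * (ε * Real.sqrt (n+1))
          = (ε * ε) * ((Real.sqrt (n+1) : ℂ) * (Real.sqrt (n+1) : ℂ)) := by ring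
        _ = ((n:ℂ) + 1) := by rw [hε, h1, one_mul]
    refine haint z (hsub25 hz25) ((n:ℤ) + 1) ?_
    rw [haz]; push_cast; ring
  -- derivative bound for w
  have hsubcb4 : closedBall (0:ℂ) 4 ⊆ ball 0 12.5 := by
    intro z hz
    rw [mem_closedBall_zero_iff] at hz
    rw [mem_ball_zero_iff]
    linarith
  have hwdOn : DifferentiableOn ℂ w (ball (0:ℂ) 12.5) := fun z hz =>
    (hwd z hz).differentiableAt.differentiableWithinAt
  have hderiv : ∀ z₀ ∈ closedBall (0:ℂ) 4, ‖deriv w z₀‖ ≤ 64 := by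
    intro z₀ hz₀
    by_contra hcon
    push_neg at hcon
    have hball8 : ball z₀ (2*4) ⊆ ball (0:ℂ) 12.5 := by
      intro z hzz
      rw [mem_ball] at hzz
      rw [mem_ball_zero_iff]
      rw [mem_closedBall_zero_iff] at hz₀
      have htri := dist_triangle z z₀ 0
      rw [dist_zero_right, dist_zero_right] at htri
      have h8 : dist z z₀ < 8 := by norm_num at hzz; linarith
      linarith
    obtain ⟨v, hv⟩ := bloch (by norm_num : (0:ℝ) < 4) (hwdOn.mono hball8)
    obtain ⟨s, hs, hsd⟩ := grid_net v
    have hlt : ‖s - v‖ < 4 * ‖deriv w z₀‖ / 64 := by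
      calc ‖s - v‖ = ‖v - s‖ := norm_sub_rev s v
        _ ≤ 4 := hsd
        _ < 4 * ‖deriv w z₀‖ / 64 := by linarith
    obtain ⟨z, hzball, hzs⟩ := hv s hlt
    exact havoid z (hball8 hzball) (hzs ▸ hs)
  -- bound on w
  have hwval : ∀ z ∈ closedBall (0:ℂ) 4, HasDerivAt w (deriv w z) z := by
    intro z hz
    exact (hwd z (hsubcb4 hz)).differentiableAt.hasDerivAt
  have hwb : ∀ z ∈ closedBall (0:ℂ) 4, ‖w z‖ ≤ ‖w 0‖ + 256 := by
    intro z hz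
    have h0 : (0:ℂ) ∈ closedBall (0:ℂ) 4 := mem_closedBall_self (by norm_num)
    have := mvt (convex_closedBall (0:ℂ) 4) w (deriv w) hwval hderiv hz h0
    have hz4 : ‖z - 0‖ ≤ 4 := by
      rw [sub_zero]; rwa [mem_closedBall_zero_iff] at hz
    have h1 : ‖w z - w 0‖ ≤ 64 * 4 := le_trans this (by
      have := mul_le_mul_of_nonneg_left hz4 (by norm_num : (0:ℝ) ≤ 64)
      linarith)
    calc ‖w z‖ = ‖w 0 + (w z - w 0)‖ := by congr 1; ring
      _ ≤ ‖w 0‖ + ‖w z - w 0‖ := norm_add_le _ _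
      _ ≤ ‖w 0‖ + 256 := by linarith
  -- bound on w 0
  have h0b50 : (0:ℂ) ∈ ball (0:ℂ) 50 := mem_ball_self (by norm_num)
  have h0b25 : (0:ℂ) ∈ ball (0:ℂ) 25 := mem_ball_self (by norm_num)
  have ha0abs : ‖a 0‖ ≤ A - 1 := by
    have ha00 : a 0 = φ 0 / (2*(π:ℂ)*I) := by rw [ha]
    rw [ha00, hφ0]
    rw [norm_div]
    have habs2 : ‖2*(π:ℂ)*I‖ = 2*π := by
      simp [Complex.norm_real, abs_of_pos hπ]
    rw [habs2]
    rw [div_le_iff₀ (by positivity)]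
    have h1 : ‖Complex.log (g 0)‖ ≤ |Real.log (‖g 0‖)| + π := norm_log_le
    have h2 : |Real.log (‖g 0‖)| ≤ Real.log (2*M) := by
      refine abs_log_le (by linarith) ?_ ?_
      · have : (2*M)⁻¹ ≤ 1/2 := by
          rw [inv_le_comm₀ (by linarith) (by norm_num)]
          linarith
        linarith
      · linarith
    have : (A - 1) * (2*π) = Real.log (2*M) + π := by rw [hA]; field_simp; ring
    rw [this]
    calc ‖Complex.log (g 0)‖ = ‖Complex.log (g 0)‖ := rfl
      _ ≤ |Real.log (‖g 0‖)| + π := h1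
      _ ≤ Real.log (2*M) + π := by linarith
  have hsa0 : ‖sa 0‖ ≤ A := by
    have h1 : ‖sa 0‖ * ‖sa 0‖ = ‖a 0‖ := by
      rw [← norm_mul, hsa2 0 h0b25]
    have h2 : ‖sa 0‖ = Real.sqrt (‖a 0‖) := by
      rw [← h1, Real.sqrt_mul_self (norm_nonneg _)]
    rw [h2]
    calc Real.sqrt (‖a 0‖) ≤ Real.sqrt A := by
          apply Real.sqrt_le_sqrt; linarith
      _ ≤ A := by
          nlinarith [Real.sq_sqrt (show (0:ℝ) ≤ A by linarith),
            Real.sqrt_nonneg A]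
  have hsb0 : ‖sb 0‖ ≤ A + 1 := by
    have h1 : ‖sb 0‖ * ‖sb 0‖ = ‖a 0 - 1‖ := by
      rw [← norm_mul, hsb2 0 h0b25]
    have h2 : ‖sb 0‖ = Real.sqrt (‖a 0 - 1‖) := by
      rw [← h1, Real.sqrt_mul_self (norm_nonneg _)]
    have h3 : ‖a 0 - 1‖ ≤ A := by
      calc ‖a 0 - 1‖ ≤ ‖a 0‖ + ‖(1:ℂ)‖ := by
            have := norm_sub_le (a 0) (1:ℂ)
            simpa using this
        _ ≤ (A - 1) + 1 := by
            have : ‖(1:ℂ)‖ = 1 := by simp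
            rw [this]; linarith
        _ = A := by ring
    rw [h2]
    calc Real.sqrt (‖a 0 - 1‖) ≤ Real.sqrt (A+1) := by
          apply Real.sqrt_le_sqrt; linarith
      _ ≤ A + 1 := by
          nlinarith [Real.sq_sqrt (show (0:ℝ) ≤ A+1 by linarith),
            Real.sqrt_nonneg (A+1)]
  have hb0up : ‖b 0‖ ≤ c₂ := by
    rw [hb]
    calc ‖sa 0 - sb 0‖ ≤ ‖sa 0‖ + ‖sb 0‖ := by
          have := norm_sub_le (sa 0) (sb 0)
          simpa using this
      _ ≤ A + (A + 1) := add_le_add hsa0 hsb0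
      _ ≤ c₂ := by rw [hc₂]; linarith
  have hb0low : c₂⁻¹ ≤ ‖b 0‖ := by
    have hmul : b 0 * (sa 0 + sb 0) = 1 := by
      show (sa 0 - sb 0) * (sa 0 + sb 0) = 1
      linear_combination hsa2 0 h0b25 - hsb2 0 h0b25
    have habs : ‖b 0‖ * ‖sa 0 + sb 0‖ = 1 := by
      rw [← norm_mul, hmul, norm_one]
    have hsum : ‖sa 0 + sb 0‖ ≤ 2*A + 1 := by
      calc ‖sa 0 + sb 0‖ ≤ ‖sa 0‖ + ‖sb 0‖ :=
            norm_add_le _ _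
        _ ≤ A + (A + 1) := add_le_add hsa0 hsb0
        _ = 2*A + 1 := by ring
    have hpos : 0 < ‖sa 0 + sb 0‖ := by
      by_contra hc
      push_neg at hc
      have : ‖sa 0 + sb 0‖ = 0 := le_antisymm hc (norm_nonneg _)
      rw [this, mul_zero] at habs
      norm_num at habs
    have h1le : (1:ℝ) ≤ ‖b 0‖ * c₂ := by
      calc (1:ℝ) = ‖b 0‖ * ‖sa 0 + sb 0‖ := habs.symm
        _ ≤ ‖b 0‖ * (2*A+1) := by
            apply mul_le_mul_of_nonneg_left hsum (norm_nonneg _)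
        _ ≤ ‖b 0‖ * c₂ := by
            apply mul_le_mul_of_nonneg_left (show (2*A+1:ℝ) ≤ c₂ by rw [hc₂]; linarith)
              (norm_nonneg _)
    rw [inv_eq_one_div, div_le_iff₀ (by linarith : (0:ℝ) < c₂)]
    linarith
  have hw0b : ‖w 0‖ ≤ Real.log c₂ + π := by
    rw [hw0]
    calc ‖Complex.log (b 0)‖ ≤ |Real.log (‖b 0‖)| + π := norm_log_le
      _ ≤ Real.log c₂ + π := add_le_add (abs_log_le hc₂1 hb0low hb0up) le_rfl
  -- final bound
  intro z hz
  have hzb125 : z ∈ ball (0:ℂ) 12.5 := hsubcb4 hz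
  have hzb25 : z ∈ ball (0:ℂ) 25 := hsub125 hzb125
  have hzb50 : z ∈ ball (0:ℂ) 50 := hsub25 hzb25
  have hwzb : ‖w z‖ ≤ W := by
    have := hwb z hz
    rw [hW]
    linarith
  have hbz : ‖b z‖ ≤ Real.exp W := by
    rw [← hwe z hzb125, Complex.norm_exp]
    apply Real.exp_le_exp.mpr
    calc (w z).re ≤ |(w z).re| := le_abs_self _
      _ ≤ ‖w z‖ := Complex.abs_re_le_norm _
      _ ≤ W := hwzb
  have hbzinv : ‖(b z)⁻¹‖ ≤ Real.exp W := by
    rw [← hwe z hzb125, ← Complex.exp_neg, Complex.norm_exp]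
    apply Real.exp_le_exp.mpr
    calc (-(w z)).re = -((w z).re) := by simp
      _ ≤ |(w z).re| := neg_le_abs _
      _ ≤ ‖w z‖ := Complex.abs_re_le_norm _
      _ ≤ W := hwzb
  have hsaz : ‖sa z‖ ≤ Real.exp W := by
    rw [hsasum z hzb25]
    rw [norm_div]
    have : ‖(2:ℂ)‖ = 2 := by norm_num
    rw [this]
    rw [div_le_iff₀ (by norm_num : (0:ℝ) < 2)]
    calc ‖b z + (b z)⁻¹‖ ≤ ‖b z‖ + ‖(b z)⁻¹‖ :=
          norm_add_le _ _
      _ ≤ Real.exp W + Real.exp W := add_le_add hbz hbzinv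
      _ = Real.exp W * 2 := by ring
  have haz : ‖a z‖ ≤ Real.exp (W + W) := by
    rw [← hsa2 z hzb25, norm_mul, Real.exp_add]
    exact mul_le_mul hsaz hsaz (norm_nonneg _) (Real.exp_pos _).le
  have hφz : ‖φ z‖ ≤ 2*π*Real.exp (W+W) := by
    have haz' : a z = φ z / (2*(π:ℂ)*I) := by rw [ha]
    have : φ z = a z * (2*(π:ℂ)*I) := by
      rw [haz']
      field_simp
    rw [this, norm_mul]
    have habs2 : ‖2*(π:ℂ)*I‖ = 2*π := by
      simp [Complex.norm_real, abs_of_pos hπ]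
    rw [habs2]
    calc ‖a z‖ * (2*π) ≤ Real.exp (W+W) * (2*π) := by
          apply mul_le_mul_of_nonneg_right haz (by positivity)
      _ = 2*π*Real.exp (W+W) := by ring
  rw [← hφe z hzb50, Complex.norm_exp]
  apply Real.exp_le_exp.mpr
  calc (φ z).re ≤ |(φ z).re| := le_abs_self _
    _ ≤ ‖φ z‖ := Complex.abs_re_le_norm _
    _ ≤ 2*π*Real.exp (W+W) := hφz

/-- **Schottky's theorem**, without normalization at the center. -/
lemma schottky (M : ℝ) (hM : 1 ≤ M) : ∃ C : ℝ, ∀ g : ℂ → ℂ,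
    DifferentiableOn ℂ g (ball (0:ℂ) 100) → (∀ z ∈ ball (0:ℂ) 100, g z ≠ 0) →
    (∀ z ∈ ball (0:ℂ) 100, g z ≠ 1) → ‖g 0‖ ≤ M →
    ∀ z ∈ closedBall (0:ℂ) 4, ‖g z‖ ≤ C := by
  obtain ⟨C₁, hC₁⟩ := schottky_core M hM
  obtain ⟨C₂, hC₂⟩ := schottky_core 2 (by norm_num)
  refine ⟨max C₁ (C₂ + 1), ?_⟩
  intro g hg hg0 hg1 hgM z hz
  rcases le_or_gt (1/2 : ℝ) (‖g 0‖) with hlow | hlow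
  · exact le_trans (hC₁ g hg hg0 hg1 hlow hgM z hz) (le_max_left _ _)
  · set h : ℂ → ℂ := fun w => 1 - g w with hh
    have hhd : DifferentiableOn ℂ h (ball (0:ℂ) 100) :=
      (differentiableOn_const 1).sub hg
    have hh0 : ∀ w ∈ ball (0:ℂ) 100, h w ≠ 0 := by
      intro w hw hcon
      rw [hh, sub_eq_zero] at hcon
      exact hg1 w hw hcon.symm
    have hh1 : ∀ w ∈ ball (0:ℂ) 100, h w ≠ 1 := by
      intro w hw hcon
      rw [hh] at hcon
      have : g w = 0 := by linear_combination -hcon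
      exact hg0 w hw this
    have hhlow : 1/2 ≤ ‖h 0‖ := by
      have h1 : ‖h 0‖ ≥ ‖(1:ℂ)‖ - ‖g 0‖ := by
        have := norm_sub_le (1:ℂ) (g 0)
        have h2 := norm_sub_norm_le (1:ℂ) (g 0)
        simpa [hh] using h2
      simp only [norm_one] at h1
      linarith
    have hhup : ‖h 0‖ ≤ 2 := by
      have h1 : ‖h 0‖ ≤ ‖(1:ℂ)‖ + ‖g 0‖ := by
        have := norm_sub_le (1:ℂ) (g 0)
        simpa [hh] using this
      simp only [norm_one] at h1
      linarith
    have hbound := hC₂ h hhd hh0 hh1 hhlow hhup z hz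
    have : ‖g z‖ ≤ 1 + ‖h z‖ := by
      have hgz : g z = 1 - h z := by rw [hh]; ring
      rw [hgz]
      have := norm_sub_le (1:ℂ) (h z)
      simpa using this
    calc ‖g z‖ ≤ 1 + ‖h z‖ := this
      _ ≤ 1 + C₂ := by linarith
      _ ≤ max C₁ (C₂ + 1) := by
          have := le_max_right C₁ (C₂ + 1)
          linarith

/-- Uniform bound on circles through near-`c` points, for `f` omitting `0` and `c`. -/
lemma circle_bound {c : ℂ} (hc : c ≠ 0) : ∃ C : ℝ, ∀ (R : ℝ), 0 < R → ∀ f : ℂ → ℂ,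
    (∀ z ∈ ball (0:ℂ) R \ {0}, DifferentiableAt ℂ f z) →
    (∀ z ∈ ball (0:ℂ) R \ {0}, f z ≠ 0) →
    (∀ z ∈ ball (0:ℂ) R \ {0}, f z ≠ c) →
    ∀ a : ℂ, a ≠ 0 → ‖a‖ * Real.exp 100 < R → ‖f a‖ ≤ ‖c‖ →
    ∀ z : ℂ, ‖z‖ = ‖a‖ → ‖f z‖ ≤ C := by
  obtain ⟨C₁, hC₁⟩ := schottky 1 le_rfl
  refine ⟨‖c‖ * C₁, ?_⟩
  intro R hR f hfd hf0 hfc a ha0 haR hafc z hza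
  have hc0 : 0 < ‖c‖ := by
    simpa using norm_pos_iff.mpr hc
  have ha0' : 0 < ‖a‖ := by
    simpa using norm_pos_iff.mpr ha0
  have hmem : ∀ w ∈ ball (0:ℂ) 100, a * Complex.exp w ∈ ball (0:ℂ) R \ {0} := by
    intro w hw
    rw [mem_ball_zero_iff] at hw
    constructor
    · rw [mem_ball_zero_iff]
      have h1 : ‖a * Complex.exp w‖ = ‖a‖ * Real.exp w.re := by
        rw [norm_mul, Complex.norm_exp]
      rw [show ‖a * Complex.exp w‖ = ‖a * Complex.exp w‖ from rfl, h1]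
      have h2 : w.re < 100 := by
        calc w.re ≤ |w.re| := le_abs_self _
          _ ≤ ‖w‖ := Complex.abs_re_le_norm w
          _ < 100 := hw
      calc ‖a‖ * Real.exp w.re < ‖a‖ * Real.exp 100 := by
            exact mul_lt_mul_of_pos_left (Real.exp_lt_exp.mpr h2) ha0'
        _ < R := haR
    · simp only [mem_singleton_iff]
      exact mul_ne_zero ha0 (Complex.exp_ne_zero w)
  set g : ℂ → ℂ := fun w => f (a * Complex.exp w) / c with hg
  have hgd : DifferentiableOn ℂ g (ball (0:ℂ) 100) := by
    intro w hw
    have hin : DifferentiableAt ℂ (fun w : ℂ => a * Complex.exp w) w :=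
      (Complex.differentiable_exp w).const_mul a
    have houter : DifferentiableAt ℂ f (a * Complex.exp w) := hfd _ (hmem w hw)
    exact ((houter.comp w hin).div_const c).differentiableWithinAt
  have hg0 : ∀ w ∈ ball (0:ℂ) 100, g w ≠ 0 := fun w hw =>
    div_ne_zero (hf0 _ (hmem w hw)) hc
  have hg1 : ∀ w ∈ ball (0:ℂ) 100, g w ≠ 1 := by
    intro w hw hcon
    rw [hg, div_eq_one_iff_eq hc] at hcon
    exact hfc _ (hmem w hw) hcon
  have hgM : ‖g 0‖ ≤ 1 := by
    rw [hg]
    simp only [Complex.exp_zero, mul_one]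
    rw [norm_div]
    rw [div_le_one hc0]
    exact hafc
  have hkey := hC₁ g hgd hg0 hg1 hgM
  -- parametrize the circle point
  have hz0 : z ≠ 0 := by
    intro h
    rw [h] at hza
    simp at hza
    exact ha0'.ne' hza.symm
  set u : ℂ := z / a with hu
  have hu1 : ‖u‖ = 1 := by
    rw [hu, norm_div, hza, div_self ha0'.ne']
  have hune : u ≠ 0 := by
    intro h
    rw [h] at hu1
    simp at hu1
  have hlogu : Complex.log u ∈ closedBall (0:ℂ) 4 := by
    rw [mem_closedBall_zero_iff]
    calc ‖Complex.log u‖ ≤ |Real.log (‖u‖)| + π := norm_log_le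
      _ = π := by rw [hu1, Real.log_one, abs_zero, zero_add]
      _ ≤ 4 := by linarith [Real.pi_le_four]
  have hgu := hkey (Complex.log u) hlogu
  have hgval : g (Complex.log u) = f z / c := by
    show f (a * Complex.exp (Complex.log u)) / c = f z / c
    rw [Complex.exp_log hune, hu]
    congr 2
    field_simp
  rw [hgval, norm_div] at hgu
  rw [div_le_iff₀ hc0] at hgu
  calc ‖f z‖ ≤ 1 * (C₁ * ‖c‖) := by linarith
    _ = ‖c‖ * C₁ := by ring

/-- A function differentiable and bounded on a punctured ball is meromorphic at the center. -/
lemma mero_of_bdd {δ : ℝ} (hδ : 0 < δ) {f : ℂ → ℂ}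
    (hfd : ∀ z ∈ ball (0:ℂ) δ \ {0}, DifferentiableAt ℂ f z)
    {C : ℝ} (hC : ∀ z ∈ ball (0:ℂ) δ \ {0}, ‖f z‖ ≤ C) : MeromorphicAt f 0 := by
  have hs : ball (0:ℂ) δ ∈ 𝓝 (0:ℂ) := ball_mem_nhds _ hδ
  have hd : DifferentiableOn ℂ f (ball (0:ℂ) δ \ {0}) := fun z hz =>
    (hfd z hz).differentiableWithinAt
  have hb : BddAbove (norm ∘ f '' (ball (0:ℂ) δ \ {0})) := by
    refine ⟨C, ?_⟩
    rintro y ⟨z, hz, rfl⟩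
    exact hC z hz
  have hF := Complex.differentiableOn_update_limUnder_of_bddAbove hs hd hb
  have hFan : AnalyticAt ℂ (Function.update f 0 (limUnder (𝓝[≠] 0) f)) 0 :=
    hF.analyticAt (isOpen_ball.mem_nhds (mem_ball_self hδ))
  have hFm : MeromorphicAt (Function.update f 0 (limUnder (𝓝[≠] 0) f)) 0 :=
    hFan.meromorphicAt
  refine hFm.congr ?_
  filter_upwards [self_mem_nhdsWithin] with z hz
  exact Function.update_of_ne hz _ _

/-- The main step: `f` cannot omit the value `c` on a small punctured disk. -/
lemma no_omit {r : ℝ} (hr : 0 < r) {f : ℂ → ℂ}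
    (hf : ∀ z ∈ ball (0 : ℂ) r \ {0}, DifferentiableAt ℂ f z)
    (hfne : ∀ z ∈ ball (0 : ℂ) r \ {0}, f z ≠ 0)
    (hnm : ¬ MeromorphicAt f 0) {c : ℂ} (hc : c ≠ 0) {ε : ℝ} (hε : 0 < ε) (hεr : ε ≤ r) :
    ¬ (∀ z ∈ ball (0 : ℂ) ε \ {0}, f z ≠ c) := by
  intro homit
  have hsubε : ball (0:ℂ) ε \ {0} ⊆ ball (0:ℂ) r \ {0} := by
    intro z hz
    exact ⟨ball_subset_ball hεr hz.1, hz.2⟩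
  have hfd' : ∀ z ∈ ball (0:ℂ) ε \ {0}, DifferentiableAt ℂ f z := fun z hz => hf z (hsubε hz)
  have hf0' : ∀ z ∈ ball (0:ℂ) ε \ {0}, f z ≠ 0 := fun z hz => hfne z (hsubε hz)
  have hcabs : 0 < ‖c‖ := by
    simpa using norm_pos_iff.mpr hc
  -- dichotomy
  by_cases hcase : ∃ δ : ℝ, 0 < δ ∧ δ ≤ ε ∧ ∀ z ∈ ball (0:ℂ) δ \ {0},
      ‖c‖ ≤ ‖f z‖
  · -- then 1/f is bounded near 0, so f is meromorphic at 0; contradiction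
    obtain ⟨δ, hδ0, hδε, hδ⟩ := hcase
    have hsubδ : ball (0:ℂ) δ \ {0} ⊆ ball (0:ℂ) ε \ {0} := by
      intro z hz; exact ⟨ball_subset_ball hδε hz.1, hz.2⟩
    set g : ℂ → ℂ := fun z => (f z)⁻¹ with hg
    have hgd : ∀ z ∈ ball (0:ℂ) δ \ {0}, DifferentiableAt ℂ g z := fun z hz =>
      (hfd' z (hsubδ hz)).inv (hf0' z (hsubδ hz))
    have hgb : ∀ z ∈ ball (0:ℂ) δ \ {0}, ‖g z‖ ≤ (‖c‖)⁻¹ := by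
      intro z hz
      rw [hg]
      show ‖(f z)⁻¹‖ ≤ (‖c‖)⁻¹
      rw [norm_inv]
      have h1 := hδ z hz
      have h2 : 0 < ‖f z‖ := lt_of_lt_of_le hcabs h1
      exact inv_anti₀ hcabs h1
    have hgm : MeromorphicAt g 0 := mero_of_bdd hδ0 hgd hgb
    have hginv : MeromorphicAt g⁻¹ 0 := hgm.inv
    refine hnm (hginv.congr ?_)
    have hball : ball (0:ℂ) δ ∈ 𝓝[≠] (0:ℂ) := mem_nhdsWithin_of_mem_nhds (ball_mem_nhds _ hδ0)
    filter_upwards [hball, self_mem_nhdsWithin] with z hz1 hz2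
    show ((f z)⁻¹)⁻¹ = f z
    rw [inv_inv]
  · -- points with small |f| arbitrarily close to 0
    push_neg at hcase
    have hpts : ∀ δ : ℝ, 0 < δ → δ ≤ ε → ∃ a ∈ ball (0:ℂ) δ \ {0},
        ‖f a‖ ≤ ‖c‖ := by
      intro δ h1 h2
      obtain ⟨a, ha, hfa⟩ := hcase δ h1 h2
      exact ⟨a, ha, hfa.le⟩
    obtain ⟨C, hC⟩ := circle_bound hc
    have hCspec := hC ε hε f hfd' hf0' homit
    set D : ℝ := ε / Real.exp 100 with hD
    have hD0 : 0 < D := by positivity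
    have hDε : D ≤ ε := by
      rw [hD, div_le_iff₀ (Real.exp_pos _)]
      nlinarith [Real.one_le_exp (by norm_num : (0:ℝ) ≤ 100), hε]
    obtain ⟨a₁, ha₁mem, ha₁f⟩ := hpts D hD0 hDε
    obtain ⟨ha₁ball, ha₁ne⟩ := ha₁mem
    rw [mem_ball_zero_iff] at ha₁ball
    have ha₁0 : a₁ ≠ 0 := ha₁ne
    have ha₁abs : 0 < ‖a₁‖ := by
      simpa using norm_pos_iff.mpr ha₁0
    have ha₁R : ‖a₁‖ * Real.exp 100 < ε := by
      have : ‖a₁‖ < D := ha₁ball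
      calc ‖a₁‖ * Real.exp 100 < D * Real.exp 100 :=
            mul_lt_mul_of_pos_right this (Real.exp_pos _)
        _ = ε := by rw [hD]; field_simp
    set t₁ : ℝ := ‖a₁‖ with ht₁
    -- the claim: |f| ≤ C on the punctured ball of radius t₁ (boundary included)
    have hclaim : ∀ z : ℂ, 0 < ‖z‖ → ‖z‖ ≤ t₁ → ‖f z‖ ≤ C := by
      intro z hz0 hzt
      rcases eq_or_lt_of_le hzt with heq | hlt
      · exact hCspec a₁ ha₁0 ha₁R ha₁f z heq
      · -- choose an inner circle
        obtain ⟨a₂, ha₂mem, ha₂f⟩ := hpts (‖z‖) hz0 (by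
          have h1 : t₁ < D := ha₁ball
          linarith)
        obtain ⟨ha₂ball, ha₂ne⟩ := ha₂mem
        rw [mem_ball_zero_iff] at ha₂ball
        have ha₂0 : a₂ ≠ 0 := ha₂ne
        have ha₂abs : 0 < ‖a₂‖ := by
          simpa using norm_pos_iff.mpr ha₂0
        set t₂ : ℝ := ‖a₂‖ with ht₂
        have ht₂z : t₂ < ‖z‖ := ha₂ball
        have ha₂R : ‖a₂‖ * Real.exp 100 < ε := by
          have h1 : t₂ < t₁ := lt_trans ht₂z hlt
          have h2 : t₁ < D := ha₁ball
          calc ‖a₂‖ * Real.exp 100 < D * Real.exp 100 := by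
                apply mul_lt_mul_of_pos_right (by linarith) (Real.exp_pos _)
            _ = ε := by rw [hD]; field_simp
        -- maximum principle on the annulus
        set U : Set ℂ := {w : ℂ | t₂ < ‖w‖ ∧ ‖w‖ < t₁} with hU
        have hUopen : IsOpen U := by
          refine IsOpen.inter ?_ ?_
          · exact isOpen_lt continuous_const continuous_norm
          · exact isOpen_lt continuous_norm continuous_const
        have hUsub : U ⊆ ball (0:ℂ) ε \ {0} := by
          intro w hw
          constructor
          · rw [mem_ball_zero_iff]
            show ‖w‖ < ε
            have h1 : ‖w‖ < t₁ := hw.2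
            have h2 : t₁ < D := ha₁ball
            calc ‖w‖ = ‖w‖ := rfl
              _ < ε := by linarith
          · simp only [mem_singleton_iff]
            intro h0
            rw [h0] at hw
            have hw1 : t₂ < ‖(0:ℂ)‖ := hw.1
            rw [norm_zero] at hw1
            linarith
        have hclosure : closure U ⊆ {w : ℂ | t₂ ≤ ‖w‖ ∧ ‖w‖ ≤ t₁} := by
          refine closure_minimal ?_ ?_
          · intro w hw; exact ⟨hw.1.le, hw.2.le⟩
          · refine IsClosed.inter ?_ ?_
            · exact isClosed_le continuous_const continuous_norm
            · exact isClosed_le continuous_norm continuous_const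
        have hclsub : {w : ℂ | t₂ ≤ ‖w‖ ∧ ‖w‖ ≤ t₁} ⊆ ball (0:ℂ) ε \ {0} := by
          intro w hw
          constructor
          · rw [mem_ball_zero_iff]
            show ‖w‖ < ε
            have h2 : t₁ < D := ha₁ball
            calc ‖w‖ = ‖w‖ := rfl
              _ ≤ t₁ := hw.2
              _ < ε := by linarith
          · simp only [mem_singleton_iff]
            intro h0
            rw [h0] at hw
            have hw1 : t₂ ≤ ‖(0:ℂ)‖ := hw.1
            rw [norm_zero] at hw1
            linarith
        have hdiffcl : DiffContOnCl ℂ f U := by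
          constructor
          · exact fun w hw => (hfd' w (hUsub hw)).differentiableWithinAt
          · have hcont : ContinuousOn f (ball (0:ℂ) ε \ {0}) := fun w hw =>
              (hfd' w hw).continuousAt.continuousWithinAt
            exact hcont.mono (fun w hw => hclsub (hclosure hw))
        have hfront : ∀ w ∈ frontier U, ‖f w‖ ≤ C := by
          intro w hw
          have hwU : w ∉ U := by
            rw [hUopen.frontier_eq] at hw
            exact hw.2
          have hwcl : w ∈ closure U := by
            rw [hUopen.frontier_eq] at hw
            exact hw.1
          have hwle := hclosure hwcl
          have : ‖w‖ = t₂ ∨ ‖w‖ = t₁ := by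
            rcases eq_or_lt_of_le hwle.1 with h | h
            · exact Or.inl h.symm
            rcases eq_or_lt_of_le hwle.2 with h' | h'
            · exact Or.inr h'
            · exact absurd ⟨h, h'⟩ hwU
          rcases this with h | h
          · exact hCspec a₂ ha₂0 ha₂R ha₂f w h
          · exact hCspec a₁ ha₁0 ha₁R ha₁f w h
        have hzU : z ∈ U := ⟨ht₂z, hlt⟩
        have := Complex.norm_le_of_forall_mem_frontier_norm_le
          (isBounded_ball.subset (show U ⊆ ball (0:ℂ) t₁ from fun w hw =>
            mem_ball_zero_iff.mpr hw.2)) hdiffcl hfront (subset_closure hzU)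
        exact this
    -- f is bounded on the punctured ball of radius t₁, hence meromorphic: contradiction
    have hsubt₁ : ball (0:ℂ) t₁ \ {0} ⊆ ball (0:ℂ) ε \ {0} := by
      intro w hw
      refine ⟨?_, hw.2⟩
      have hw1 := mem_ball_zero_iff.mp hw.1
      rw [mem_ball_zero_iff]
      have h2 : t₁ < D := ha₁ball
      calc ‖w‖ < t₁ := hw1
        _ < ε := by linarith
    refine hnm (mero_of_bdd ha₁abs (fun z hz => hfd' z (hsubt₁ hz)) (C := C) ?_)
    intro z hz
    have hz0 : z ≠ 0 := hz.2
    have habs0 : 0 < ‖z‖ := by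
      simpa using norm_pos_iff.mpr hz0
    have habs1 : ‖z‖ ≤ t₁ := by
      have := hz.1
      rw [mem_ball_zero_iff] at this
      exact le_of_lt this
    exact hclaim z habs0 habs1

end EP

/-- If `f` is holomorphic and nowhere vanishing on the punctured disk
`D(0,r) ∖ {0}` and does not extend meromorphically to `0`, then `f` takes every nonzero
complex value `c` in every punctured neighborhood of `0`, and in fact infinitely often. -/
theorem exp_singularity_picard
    (r : ℝ) (hr : 0 < r) (f : ℂ → ℂ)
    (hf : ∀ z ∈ Metric.ball (0 : ℂ) r \ {0}, DifferentiableAt ℂ f z)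
    (hfne : ∀ z ∈ Metric.ball (0 : ℂ) r \ {0}, f z ≠ 0)
    (hnm : ¬ MeromorphicAt f 0) :
    ∀ c : ℂ, c ≠ 0 → ∀ ε : ℝ, 0 < ε →
      (∃ z : ℂ, 0 < ‖z‖ ∧ ‖z‖ < ε ∧ f z = c) ∧
      {z : ℂ | 0 < ‖z‖ ∧ ‖z‖ < ε ∧ f z = c}.Infinite := by
  intro c hc ε hε
  have hexists : ∀ ε'' : ℝ, 0 < ε'' → ε'' ≤ r →
      ∃ z : ℂ, 0 < ‖z‖ ∧ ‖z‖ < ε'' ∧ f z = c := by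
    intro ε'' h1 h2
    have hno := EP.no_omit hr hf hfne hnm hc h1 h2
    push_neg at hno
    obtain ⟨z, hz, hfz⟩ := hno
    refine ⟨z, ?_, ?_, hfz⟩
    · exact norm_pos_iff.mpr hz.2
    · exact mem_ball_zero_iff.mp hz.1
  constructor
  · obtain ⟨z, h1, h2, h3⟩ := hexists (min ε r) (lt_min hε hr) (min_le_right _ _)
    exact ⟨z, h1, lt_of_lt_of_le h2 (min_le_left _ _), h3⟩
  · intro hfin
    set S := {z : ℂ | 0 < ‖z‖ ∧ ‖z‖ < ε ∧ f z = c} with hS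
    have hTne : (hfin.toFinset.image (fun z : ℂ => ‖z‖)).Nonempty := by
      rw [Finset.image_nonempty, Set.Finite.toFinset_nonempty]
      obtain ⟨z, h1, h2, h3⟩ := hexists (min ε r) (lt_min hε hr) (min_le_right _ _)
      exact ⟨z, h1, lt_of_lt_of_le h2 (min_le_left _ _), h3⟩
    obtain ⟨z₁, hz₁, hzm⟩ :=
      Finset.mem_image.mp ((hfin.toFinset.image (fun z : ℂ => ‖z‖)).min'_mem hTne)
    rw [Set.Finite.mem_toFinset] at hz₁
    have hm0 : 0 < (hfin.toFinset.image (fun z : ℂ => ‖z‖)).min' hTne := by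
      rw [← hzm]; exact hz₁.1
    obtain ⟨z₀, h1, h2, h3⟩ := hexists
      (min (min ((hfin.toFinset.image (fun z : ℂ => ‖z‖)).min' hTne) ε) r)
      (lt_min (lt_min hm0 hε) hr) (min_le_right _ _)
    have hz₀S : z₀ ∈ S := by
      refine ⟨h1, ?_, h3⟩
      calc ‖z₀‖ < _ := h2
        _ ≤ min ((hfin.toFinset.image (fun z : ℂ => ‖z‖)).min' hTne) ε := min_le_left _ _
        _ ≤ ε := min_le_right _ _
    have hge : (hfin.toFinset.image (fun z : ℂ => ‖z‖)).min' hTne ≤ ‖z₀‖ := by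
      refine Finset.min'_le _ _ ?_
      rw [Finset.mem_image]
      exact ⟨z₀, (Set.Finite.mem_toFinset hfin).mpr hz₀S, rfl⟩
    have hlt : ‖z₀‖ < (hfin.toFinset.image (fun z : ℂ => ‖z‖)).min' hTne := by
      calc ‖z₀‖ < _ := h2
        _ ≤ min ((hfin.toFinset.image (fun z : ℂ => ‖z‖)).min' hTne) ε := min_le_left _ _
        _ ≤ (hfin.toFinset.image (fun z : ℂ => ‖z‖)).min' hTne := min_le_left _ _
    linarith
end

section
/- Let n be a positive integer and let (P_j) be a sequence of nonzero complex polynomials such that each P_j has at most n distinct roots and every root of P_j has modulus at least r_j, where r_j → +∞. Suppose P_j → f locally uniformly on ℂ, where f is not identically zero. Then there exists a polynomial Q ∈ ℂ[z] with deg Q ≤ n such that f(z) = exp(Q(z)) for all z ∈ ℂ. -/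
open Filter Topology

open Polynomial Metric

noncomputable def Complex.abs : AbsoluteValue ℂ ℝ where
  toFun z := ‖z‖
  map_mul' := norm_mul
  nonneg' := norm_nonneg
  eq_zero' _ := norm_eq_zero
  add_le' := norm_add_le

lemma Complex.norm_eq_abs (z : ℂ) : ‖z‖ = Complex.abs z := rfl

lemma Complex.continuous_abs : Continuous Complex.abs := continuous_norm

lemma aux_prod_bound {ι : Type*} (s : Finset ι) (w : ι → ℂ) :
    ‖(∏ i ∈ s, (1 + w i)) - 1‖ ≤ (∏ i ∈ s, (1 + ‖w i‖)) - 1 := by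
  classical
  induction s using Finset.cons_induction with
  | empty => simp
  | cons a s ha ih =>
    rw [Finset.prod_cons, Finset.prod_cons]
    have hnorm : ‖∏ i ∈ s, (1 + w i)‖ ≤ ∏ i ∈ s, (1 + ‖w i‖) := by
      rw [norm_prod]
      exact Finset.prod_le_prod (fun i _ => norm_nonneg _)
        (fun i _ => (norm_add_le _ _).trans (by simp))
    have h1 : (1 + w a) * ∏ i ∈ s, (1 + w i) - 1
        = ((∏ i ∈ s, (1 + w i)) - 1) + w a * ∏ i ∈ s, (1 + w i) := by ring
    rw [h1]
    calc ‖((∏ i ∈ s, (1 + w i)) - 1) + w a * ∏ i ∈ s, (1 + w i)‖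
        ≤ ‖(∏ i ∈ s, (1 + w i)) - 1‖ + ‖w a‖ * ‖∏ i ∈ s, (1 + w i)‖ := by
          refine (norm_add_le _ _).trans ?_
          rw [norm_mul]
      _ ≤ ((∏ i ∈ s, (1 + ‖w i‖)) - 1) + ‖w a‖ * ∏ i ∈ s, (1 + ‖w i‖) := by
          gcongr
      _ = (1 + ‖w a‖) * ∏ i ∈ s, (1 + ‖w i‖) - 1 := by ring

lemma aux_iteratedDeriv_polyeval (k : ℕ) (p : Polynomial ℂ) :
    iteratedDeriv k (fun z => p.eval z) = fun z => (Polynomial.derivative^[k] p).eval z := by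
  induction k with
  | zero => simp
  | succ k ih =>
    rw [iteratedDeriv_succ, ih]
    funext z
    rw [Function.iterate_succ_apply']
    simp [Polynomial.deriv]

lemma aux_antideriv (q : Polynomial ℂ) :
    ∃ Q : Polynomial ℂ, Q.derivative = q ∧ Q.natDegree ≤ q.natDegree + 1 := by
  classical
  refine ⟨q.sum fun k a => C (a / (k + 1)) * X ^ (k + 1), ?_, ?_⟩
  · rw [Polynomial.sum, map_sum]
    conv_rhs => rw [q.as_sum_support]
    refine Finset.sum_congr rfl fun k hk => ?_
    rw [derivative_C_mul_X_pow]
    have : ((k : ℂ) + 1) ≠ 0 := by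
      have := Nat.cast_ne_zero (R := ℂ).mpr k.succ_ne_zero
      push_cast at this
      exact this
    rw [Nat.add_sub_cancel, ← C_mul_X_pow_eq_monomial]
    congr 1
    push_cast
    rw [div_mul_cancel₀ _ this]
  · rw [Polynomial.sum]
    refine Polynomial.natDegree_sum_le_of_forall_le _ _ fun k hk => ?_
    refine (Polynomial.natDegree_C_mul_le _ _).trans ?_
    refine (Polynomial.natDegree_X_pow_le _).trans ?_
    exact Nat.add_le_add_right (Polynomial.le_natDegree_of_mem_supp k hk) 1

lemma aux_dvd (p : Polynomial ℂ) :
    p ∣ p.derivative * ∏ a ∈ p.roots.toFinset, (X - C a) := by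
  classical
  by_cases hp : p = 0
  · simp [hp]
  have hsplit : p = C p.leadingCoeff *
      (∏ a ∈ p.roots.toFinset, (X - C a) ^ p.rootMultiplicity a) := by
    conv_lhs => rw [(IsAlgClosed.splits p).eq_prod_roots]
    rw [prod_multiset_root_eq_finset_root]
  have key : (∏ a ∈ p.roots.toFinset, (X - C a) ^ p.rootMultiplicity a) ∣
      p.derivative * ∏ a ∈ p.roots.toFinset, (X - C a) := by
    refine Finset.prod_dvd_of_coprime (fun a _ b _ hab => ?_) (fun a ha => ?_)
    · exact ((pairwise_coprime_X_sub_C Function.injective_id hab).pow)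
    · have hroot : p.IsRoot a := by
        rw [Multiset.mem_toFinset, mem_roots hp] at ha
        exact ha
      have hm1 : (X - C a) ^ (p.rootMultiplicity a - 1) ∣ p.derivative := by
        by_cases hd : p.derivative = 0
        · simp [hd]
        · rw [← derivative_rootMultiplicity_of_root hroot]
          exact pow_rootMultiplicity_dvd _ _
      have hm2 : (X - C a) ∣ ∏ a ∈ p.roots.toFinset, (X - C a) :=
        Finset.dvd_prod_of_mem _ ha
      have h := mul_dvd_mul hm1 hm2
      rwa [← pow_succ, Nat.sub_add_cancel ((rootMultiplicity_pos hp).mpr hroot)] at h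
  obtain ⟨q, hq⟩ := key
  refine ⟨C p.leadingCoeff⁻¹ * q, ?_⟩
  have hl : p.leadingCoeff ≠ 0 := leadingCoeff_ne_zero.mpr hp
  have hC : C p.leadingCoeff * C p.leadingCoeff⁻¹ = (1 : Polynomial ℂ) := by
    rw [← C_mul, mul_inv_cancel₀ hl, C_1]
  set l := p.leadingCoeff with hldef
  set pr := ∏ a ∈ p.roots.toFinset, (X - C a) ^ p.rootMultiplicity a with hprdef
  rw [hq]
  conv_rhs => rw [hsplit]
  rw [mul_mul_mul_comm, hC, one_mul]

lemma aux_taylor : ∀ n : ℕ, 1 ≤ n → ∀ u : ℂ → ℂ, Differentiable ℂ u →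
    iteratedDeriv n u = 0 →
    ∃ p : Polynomial ℂ, p.natDegree < n ∧ ∀ z, u z = p.eval z := by
  intro n hn
  induction n, hn using Nat.le_induction with
  | base =>
    intro u hu hder
    refine ⟨C (u 0), by simp [Nat.lt_one_iff], fun z => ?_⟩
    rw [eval_C]
    refine is_const_of_deriv_eq_zero hu (fun x => ?_) z 0
    have := congrFun hder x
    rwa [iteratedDeriv_one] at this
  | succ n hn ih =>
    intro u hu hder
    have hu' : Differentiable ℂ (deriv u) := fun z =>
      (((Complex.analyticOnNhd_univ_iff_differentiable.mpr hu).deriv) z trivial).differentiableAt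
    have hder' : iteratedDeriv n (deriv u) = 0 := by
      rw [← iteratedDeriv_succ']
      exact hder
    obtain ⟨q, hqdeg, hq⟩ := ih (deriv u) hu' hder'
    obtain ⟨Q, hQder, hQdeg⟩ := aux_antideriv q
    refine ⟨Q - C (Q.eval 0) + C (u 0), ?_, ?_⟩
    · have hb : (Q - C (Q.eval 0) + C (u 0)).natDegree ≤ n := by
        refine (Polynomial.natDegree_add_le _ _).trans (max_le ?_ ?_)
        · refine (Polynomial.natDegree_sub_le _ _).trans (max_le ?_ ?_)
          · exact hQdeg.trans (by omega)
          · simp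
        · simp
      omega
    · intro z
      have hpd : Differentiable ℂ (fun z => u z - (Q - C (Q.eval 0) + C (u 0)).eval z) :=
        hu.sub (Polynomial.differentiable _)
      have hzero : ∀ x, deriv (fun z => u z - (Q - C (Q.eval 0) + C (u 0)).eval z) x = 0 := by
        intro x
        rw [deriv_fun_sub (hu x) ((Polynomial.differentiable _) x), Polynomial.deriv]
        simp only [derivative_add, derivative_sub, derivative_C, sub_zero, add_zero, hQder]
        rw [← hq x]
        ring
      have h0 := is_const_of_deriv_eq_zero hpd hzero z 0
      simp only [eval_add, eval_sub, eval_C] at h0 ⊢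
      have h2 : u 0 - (eval 0 Q - eval 0 Q + u 0) = 0 := by ring
      exact sub_eq_zero.mp (h0.trans h2)

lemma aux_zeros_finite {f : ℂ → ℂ} (hf : Differentiable ℂ f) (hne : ∃ z, f z ≠ 0)
    {K : Set ℂ} (hK : IsCompact K) : {z | z ∈ K ∧ f z = 0}.Finite := by
  classical
  have hane : ∀ x : ℂ, ∃ U : Set ℂ, IsOpen U ∧ x ∈ U ∧ ∀ z ∈ U, z ≠ x → f z ≠ 0 := by
    intro x
    rcases (hf.analyticAt x).eventually_eq_zero_or_eventually_ne_zero with h | h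
    · exfalso
      obtain ⟨z, hz⟩ := hne
      have hall : Set.EqOn f 0 Set.univ :=
        (Complex.analyticOnNhd_univ_iff_differentiable.mpr
          hf).eqOn_zero_of_preconnected_of_eventuallyEq_zero isPreconnected_univ
          (Set.mem_univ x) (h.mono fun z hz => by simpa using hz)
      exact hz (hall (Set.mem_univ z))
    · rw [eventually_nhdsWithin_iff] at h
      obtain ⟨U, hUsub, hUo, hxU⟩ := _root_.mem_nhds_iff.mp h
      exact ⟨U, hUo, hxU, fun z hzU hzx => hUsub hzU (by simpa using hzx)⟩
  choose U hUo hUx hUz using hane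
  obtain ⟨t, _, hcover⟩ := hK.elim_nhds_subcover U (fun x _ => (hUo x).mem_nhds (hUx x))
  have hsub : {z | z ∈ K ∧ f z = 0} ⊆ ⋃ x ∈ t, {x} := by
    rintro z ⟨hzK, hz0⟩
    obtain ⟨x, hxt, hzU⟩ := Set.mem_iUnion₂.mp (hcover hzK)
    refine Set.mem_iUnion₂.mpr ⟨x, hxt, ?_⟩
    by_contra hne'
    exact hUz x z hzU (by simpa using hne') hz0
  exact (Set.Finite.biUnion t.finite_toSet fun x _ => Set.finite_singleton x).subset hsub

lemma aux_nonvanishing (P : ℕ → Polynomial ℂ) (hP : ∀ j, P j ≠ 0)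
    (r : ℕ → ℝ) (hr : Tendsto r atTop atTop)
    (hfar : ∀ j, ∀ z ∈ (P j).roots, r j ≤ Complex.abs z)
    (f : ℂ → ℂ) (hconv : TendstoLocallyUniformly (fun j z => (P j).eval z) f atTop)
    (hf : Differentiable ℂ f) (hne : ∃ z, f z ≠ 0) : ∀ z, f z ≠ 0 := by
  intro z₀ hz₀
  have hfin : {z | z ∈ closedBall (0:ℂ) (Complex.abs z₀ + 2) ∧ f z = 0}.Finite :=
    aux_zeros_finite hf hne (isCompact_closedBall 0 _)
  have hIoo : (Set.Ioo (Complex.abs z₀ + 1) (Complex.abs z₀ + 2)).Infinite :=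
    Set.Ioo_infinite (by linarith)
  obtain ⟨R, hR⟩ := (hIoo.diff (hfin.image Complex.abs)).nonempty
  have hRIoo : R ∈ Set.Ioo (Complex.abs z₀ + 1) (Complex.abs z₀ + 2) := hR.1
  have hz₀R : Complex.abs z₀ < R := by have := hRIoo.1; linarith
  have hR0 : 0 < R := lt_of_le_of_lt (Complex.abs.nonneg z₀) hz₀R
  have hsph : ∀ z : ℂ, Complex.abs z = R → f z ≠ 0 := by
    intro z hz hf0
    refine hR.2 ⟨z, ⟨⟨?_, hf0⟩, hz⟩⟩
    rw [Metric.mem_closedBall, Complex.dist_eq, sub_zero, Complex.norm_eq_abs, hz]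
    exact hRIoo.2.le
  obtain ⟨w, hw, hwmin⟩ := (isCompact_sphere (0:ℂ) R).exists_isMinOn
    (NormedSpace.sphere_nonempty.mpr hR0.le)
    ((Complex.continuous_abs.comp hf.continuous).continuousOn)
  have hwR : Complex.abs w = R := by
    rw [mem_sphere_iff_norm, sub_zero] at hw; rw [← hw]; rfl
  set ε := Complex.abs (f w) with hεdef
  have hε0 : 0 < ε := by
    have := hsph w hwR
    simpa [hεdef] using (Complex.abs.pos this)
  have hTU : TendstoUniformlyOn (fun j z => (P j).eval z) f atTop (closedBall 0 R) :=
    (tendstoLocallyUniformly_iff_forall_isCompact.mp hconv) _ (isCompact_closedBall 0 R)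
  rw [Metric.tendstoUniformlyOn_iff] at hTU
  obtain ⟨j, h1, h2⟩ := ((hTU (ε/2) (by positivity)).and (hr.eventually_gt_atTop R)).exists
  have hnoz : ∀ z : ℂ, Complex.abs z ≤ R → Polynomial.eval z (P j) ≠ 0 := by
    intro z hzR h0
    have hzroot : z ∈ (P j).roots := by
      rw [Polynomial.mem_roots (hP j)]
      exact h0
    have := hfar j z hzroot
    linarith
  have hlow : ∀ z ∈ Metric.sphere (0:ℂ) R, ε/2 ≤ Complex.abs (Polynomial.eval z (P j)) := by
    intro z hz
    have hzR : Complex.abs z = R := by rw [mem_sphere_iff_norm, sub_zero] at hz; rw [← hz]; rfl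
    have hzb : z ∈ closedBall (0:ℂ) R := by
      rw [Metric.mem_closedBall, Complex.dist_eq, sub_zero, Complex.norm_eq_abs, hzR]
    have hd := h1 z hzb
    rw [Complex.dist_eq, Complex.norm_eq_abs] at hd
    have hmin : ε ≤ Complex.abs (f z) := hwmin hz
    have htri : Complex.abs (f z) - Complex.abs (Polynomial.eval z (P j)) ≤
        Complex.abs (f z - Polynomial.eval z (P j)) := by
      simpa [Complex.norm_eq_abs] using
        norm_sub_norm_le (f z) (Polynomial.eval z (P j))
    linarith
  have hdiff : DifferentiableOn ℂ (fun z => (Polynomial.eval z (P j))⁻¹)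
      (closure (Metric.ball (0:ℂ) R)) := by
    rw [closure_ball (0:ℂ) hR0.ne']
    refine DifferentiableOn.inv ((P j).differentiable.differentiableOn) ?_
    intro z hz
    refine hnoz z ?_
    rw [Metric.mem_closedBall, Complex.dist_eq, sub_zero] at hz
    exact hz
  have hmax := Complex.norm_le_of_forall_mem_frontier_norm_le
    (Metric.isBounded_ball (x := (0:ℂ)) (r := R)) hdiff.diffContOnCl
    (C := (ε/2)⁻¹) ?_ (z := z₀) ?_
  · have hz₀b : Complex.abs z₀ ≤ R := hz₀R.le
    have hPz₀ : Polynomial.eval z₀ (P j) ≠ 0 := hnoz z₀ hz₀b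
    rw [norm_inv] at hmax
    have hge : ε/2 ≤ ‖Polynomial.eval z₀ (P j)‖ := by
      have hpos : 0 < ‖Polynomial.eval z₀ (P j)‖ := norm_pos_iff.mpr hPz₀
      have := (inv_le_inv₀ hpos (by positivity : (0:ℝ) < ε/2)).mp hmax
      linarith
    have hz₀cb : z₀ ∈ closedBall (0:ℂ) R := by
      rw [Metric.mem_closedBall, Complex.dist_eq, sub_zero]; exact hz₀R.le
    have := h1 z₀ hz₀cb
    rw [Complex.dist_eq, hz₀, zero_sub, norm_neg, Complex.norm_eq_abs] at this
    rw [Complex.norm_eq_abs] at hge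
    linarith
  · intro z hz
    rw [frontier_ball (0:ℂ) hR0.ne'] at hz
    rw [norm_inv]
    have := hlow z hz
    rw [← Complex.norm_eq_abs] at this
    exact inv_anti₀ (by positivity) this
  · rw [closure_ball (0:ℂ) hR0.ne', Metric.mem_closedBall, Complex.dist_eq, sub_zero]
    exact hz₀R.le

set_option maxHeartbeats 1000000 in

/-- Let `(P j)` be nonzero polynomials, each with at most `n` distinct
roots, all of modulus at least `r j` with `r j → ∞`. If `P j → f` locally uniformly on `ℂ`
with `f` not identically zero, then `f = exp Q` for some polynomial `Q` of degree `≤ n`. -/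
theorem limit_of_polys_with_escaping_roots
    (n : ℕ) (hn : 1 ≤ n) (P : ℕ → Polynomial ℂ) (hP : ∀ j, P j ≠ 0)
    (hcard : ∀ j, (P j).roots.toFinset.card ≤ n)
    (r : ℕ → ℝ) (hr : Tendsto r atTop atTop)
    (hfar : ∀ j, ∀ z ∈ (P j).roots, r j ≤ ‖z‖)
    (f : ℂ → ℂ)
    (hconv : TendstoLocallyUniformly (fun j z => (P j).eval z) f atTop)
    (hne : ∃ z : ℂ, f z ≠ 0) :
    ∃ Q : Polynomial ℂ, Q.natDegree ≤ n ∧ ∀ z : ℂ, f z = Complex.exp (Q.eval z) := by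
  classical
  have hdiffP : ∀ j, Differentiable ℂ fun z => (P j).eval z := fun j => (P j).differentiable
  have hf : Differentiable ℂ f := by
    have := (tendstoLocallyUniformlyOn_univ.mpr hconv).differentiableOn
      (Filter.Eventually.of_forall fun j => (hdiffP j).differentiableOn) isOpen_univ
    rwa [differentiableOn_univ] at this
  have hfz : ∀ z, f z ≠ 0 := aux_nonvanishing P hP r hr hfar f hconv hf hne
  have hdf : Differentiable ℂ (deriv f) := fun z =>
    (((Complex.analyticOnNhd_univ_iff_differentiable.mpr hf).deriv) z trivial).differentiableAt
  have hconv' : TendstoLocallyUniformly (fun j z => ((P j).derivative).eval z) (deriv f) atTop := by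
    have h := (tendstoLocallyUniformlyOn_univ.mpr hconv).deriv
      (Filter.Eventually.of_forall fun j => (hdiffP j).differentiableOn) isOpen_univ
    rw [tendstoLocallyUniformlyOn_univ] at h
    have he : (deriv ∘ fun j z => (P j).eval z) = fun j z => ((P j).derivative).eval z := by
      funext j z
      show deriv (fun z => (P j).eval z) z = _
      simp [Polynomial.deriv]
    rwa [he] at h
  set D : ℕ → Polynomial ℂ := fun j => ∏ a ∈ (P j).roots.toFinset, (X - C a) with hD
  have hdvd : ∀ j, ∃ Nj : Polynomial ℂ, (P j).derivative * D j = P j * Nj := fun j =>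
    aux_dvd (P j)
  choose N hN using hdvd
  set M : ℕ → Polynomial ℂ := fun j => C (((D j).eval 0)⁻¹) * N j with hM
  have hDdeg : ∀ j, (D j).natDegree = (P j).roots.toFinset.card := by
    intro j
    rw [hD]
    rw [Polynomial.natDegree_prod _ _ (fun a _ => X_sub_C_ne_zero a)]
    simp
  have hNdeg : ∀ j, (N j).natDegree < n := by
    intro j
    by_cases h0 : N j = 0
    · rw [h0]; simpa using (by omega : 0 < n)
    have hD0 : D j ≠ 0 := by
      rw [hD]; exact Finset.prod_ne_zero_iff.mpr fun a _ => X_sub_C_ne_zero a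
    have hP' : (P j).derivative ≠ 0 := by
      intro hd
      apply h0
      have h := hN j
      rw [hd, zero_mul] at h
      exact (mul_eq_zero.mp h.symm).resolve_left (hP j)
    have hPdeg : 1 ≤ (P j).natDegree := by
      by_contra h
      push_neg at h
      have h1 : (P j).natDegree = 0 := by omega
      exact hP' (derivative_of_natDegree_zero h1)
    have heq : (P j).derivative.natDegree + (D j).natDegree
        = (P j).natDegree + (N j).natDegree := by
      rw [← Polynomial.natDegree_mul hP' hD0, ← Polynomial.natDegree_mul (hP j) h0, hN j]
    have hder_lt : (P j).derivative.natDegree < (P j).natDegree :=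
      Polynomial.natDegree_derivative_lt (by omega)
    have hc := hcard j
    have hd := hDdeg j
    omega
  have hMdeg : ∀ j, (M j).natDegree < n := fun j =>
    (Polynomial.natDegree_C_mul_le _ _).trans_lt (hNdeg j)
  set u : ℂ → ℂ := fun z => deriv f z / f z with hu_def
  have hu : Differentiable ℂ u := hdf.div hf hfz
  have hMu : TendstoLocallyUniformly (fun j z => (M j).eval z) u atTop := by
    rw [tendstoLocallyUniformly_iff_forall_isCompact]
    intro K hK
    obtain ⟨R₀, hR₀⟩ := hK.isBounded.subset_closedBall (0:ℂ)
    set R : ℝ := max R₀ 1 with hRdef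
    have hR1 : (1:ℝ) ≤ R := le_max_right _ _
    have hR0 : (0:ℝ) < R := lt_of_lt_of_le one_pos hR1
    have hKR : K ⊆ closedBall (0:ℂ) R :=
      hR₀.trans (closedBall_subset_closedBall (le_max_left _ _))
    obtain ⟨w, hw, hwmin⟩ := (isCompact_closedBall (0:ℂ) R).exists_isMinOn
      (Metric.nonempty_closedBall.mpr hR0.le)
      ((Complex.continuous_abs.comp hf.continuous).continuousOn)
    set m : ℝ := Complex.abs (f w) with hm
    have hm0 : 0 < m := Complex.abs.pos (hfz w)
    have hmf : ∀ z ∈ closedBall (0:ℂ) R, m ≤ Complex.abs (f z) := fun z hz => hwmin hz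
    obtain ⟨A₁, hA₁⟩ := (isCompact_closedBall (0:ℂ) R).exists_bound_of_continuousOn
      hf.continuous.continuousOn
    obtain ⟨A₂, hA₂⟩ := (isCompact_closedBall (0:ℂ) R).exists_bound_of_continuousOn
      hdf.continuous.continuousOn
    set A : ℝ := max A₁ A₂ with hA
    have hfA : ∀ z ∈ closedBall (0:ℂ) R, Complex.abs (f z) ≤ A := fun z hz =>
      le_trans (by rw [← Complex.norm_eq_abs]; exact hA₁ z hz) (le_max_left _ _)
    have hdfA : ∀ z ∈ closedBall (0:ℂ) R, Complex.abs (deriv f z) ≤ A := fun z hz =>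
      le_trans (by rw [← Complex.norm_eq_abs]; exact hA₂ z hz) (le_max_right _ _)
    have hA0 : 0 ≤ A := le_trans (Complex.abs.nonneg (f w)) (hfA w hw)
    have hTU1 : TendstoUniformlyOn (fun j z => (P j).eval z) f atTop (closedBall 0 R) :=
      (tendstoLocallyUniformly_iff_forall_isCompact.mp hconv) _ (isCompact_closedBall 0 R)
    have hTU2 : TendstoUniformlyOn (fun j z => ((P j).derivative).eval z) (deriv f) atTop
        (closedBall 0 R) :=
      (tendstoLocallyUniformly_iff_forall_isCompact.mp hconv') _ (isCompact_closedBall 0 R)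
    rw [Metric.tendstoUniformlyOn_iff] at hTU1 hTU2
    rw [Metric.tendstoUniformlyOn_iff]
    intro δ hδ
    set η : ℝ := min (min 1 (m/2)) (δ * m^2 / (16 * (A+1))) with hη
    have hη0 : 0 < η := lt_min (lt_min one_pos (by positivity)) (by positivity)
    have hη1 : η ≤ 1 := le_trans (min_le_left _ _) (min_le_left _ _)
    have hηm : η ≤ m/2 := le_trans (min_le_left _ _) (min_le_right _ _)
    have hηδ : η * (16 * (A+1)) ≤ δ * m^2 := by
      have h := min_le_right (min 1 (m/2)) (δ * m^2 / (16 * (A+1)))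
      rw [← hη] at h
      calc η * (16 * (A+1)) ≤ (δ * m^2 / (16 * (A+1))) * (16 * (A+1)) := by
            have : (0:ℝ) < 16 * (A+1) := by positivity
            exact mul_le_mul_of_nonneg_right h this.le
        _ = δ * m^2 := by field_simp
    set η₃ : ℝ := δ * m / (8 * (A+1)) with hη₃
    have hη₃0 : 0 < η₃ := by positivity
    have hratio : Tendsto (fun j => (1 + R / r j)^n - 1) atTop (𝓝 0) := by
      have h1 : Tendsto (fun j => R / r j) atTop (𝓝 0) := tendsto_const_nhds.div_atTop hr
      have h2 : Tendsto (fun j => (1 + R / r j)^n) atTop (𝓝 ((1+(0:ℝ))^n)) :=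
        ((tendsto_const_nhds.add h1).pow n)
      have h3 := h2.sub (tendsto_const_nhds (x := (1:ℝ)))
      simpa using h3
    have hratio' : ∀ᶠ j in atTop, (1 + R / r j)^n - 1 < η₃ :=
      hratio.eventually (gt_mem_nhds hη₃0)
    filter_upwards [hTU1 η hη0, hTU2 η hη0, hr.eventually_ge_atTop (R+1), hratio']
      with j h1 h2 h3 h4
    intro z hzK
    have hz : z ∈ closedBall (0:ℂ) R := hKR hzK
    have hzR : Complex.abs z ≤ R := by
      rw [Metric.mem_closedBall, Complex.dist_eq, sub_zero] at hz; exact hz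
    have h1z := h1 z hz
    have h2z := h2 z hz
    rw [Complex.dist_eq, Complex.norm_eq_abs] at h1z h2z
    have hfzm : m ≤ Complex.abs (f z) := hmf z hz
    have hPz : m/2 ≤ Complex.abs ((P j).eval z) := by
      have ht : Complex.abs (f z) - Complex.abs ((P j).eval z) ≤
          Complex.abs (f z - (P j).eval z) := by
        simpa [Complex.norm_eq_abs] using norm_sub_norm_le (f z) ((P j).eval z)
      linarith
    have hPz0 : (P j).eval z ≠ 0 := by
      intro h0
      rw [h0] at hPz
      simp only [map_zero] at hPz
      linarith
    have hrj0 : (0:ℝ) < r j := by linarith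
    have hroots : ∀ a ∈ (P j).roots.toFinset, r j ≤ Complex.abs a := by
      intro a ha
      rw [Multiset.mem_toFinset] at ha
      exact hfar j a ha
    have hrootsne : ∀ a ∈ (P j).roots.toFinset, a ≠ 0 := by
      intro a ha h0
      have hb := hroots a ha
      rw [h0] at hb
      simp only [map_zero] at hb
      linarith
    have hD0val : (D j).eval 0 = ∏ a ∈ (P j).roots.toFinset, (-a) := by
      simp [hD, Polynomial.eval_prod]
    have hDzval : (D j).eval z = ∏ a ∈ (P j).roots.toFinset, (z - a) := by
      simp [hD, Polynomial.eval_prod]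
    have hD0ne : (D j).eval 0 ≠ 0 := by
      rw [hD0val]
      exact Finset.prod_ne_zero_iff.mpr fun a ha => neg_ne_zero.mpr (hrootsne a ha)
    set G : ℂ := ∏ a ∈ (P j).roots.toFinset, (1 - z / a) with hG
    have hfact : (D j).eval z = (D j).eval 0 * G := by
      rw [hD0val, hDzval, hG, ← Finset.prod_mul_distrib]
      refine Finset.prod_congr rfl fun a ha => ?_
      have haz : a ≠ 0 := hrootsne a ha
      field_simp
      ring
    have hGbound : Complex.abs (G - 1) ≤ (1 + R / r j)^n - 1 := by
      have hb := aux_prod_bound ((P j).roots.toFinset) (fun a => -(z/a))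
      simp only [← sub_eq_add_neg, norm_neg, norm_div] at hb
      rw [hG]
      have hb2 : ∏ a ∈ (P j).roots.toFinset, (1 + ‖z‖ / ‖a‖) ≤ (1 + R / r j)^n := by
        have hstep : ∏ a ∈ (P j).roots.toFinset, (1 + ‖z‖ / ‖a‖) ≤
            (1 + R / r j)^((P j).roots.toFinset.card) := by
          rw [← Finset.prod_const]
          refine Finset.prod_le_prod (fun a _ => by positivity) (fun a ha => ?_)
          have hna : r j ≤ ‖a‖ := by rw [Complex.norm_eq_abs]; exact hroots a ha
          have hdiv : ‖z‖ / ‖a‖ ≤ R / r j := by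
            apply div_le_div₀ hR0.le _ hrj0 hna
            rw [Complex.norm_eq_abs]; exact hzR
          linarith
        refine hstep.trans ?_
        have hRr : 0 ≤ R / r j := div_nonneg hR0.le hrj0.le
        exact pow_le_pow_right₀ (by linarith) (hcard j)
      calc Complex.abs ((∏ a ∈ (P j).roots.toFinset, (1 - z / a)) - 1)
          ≤ (∏ a ∈ (P j).roots.toFinset, (1 + ‖z‖ / ‖a‖)) - 1 := hb
        _ ≤ (1 + R / r j)^n - 1 := by linarith
    have hNz : ((P j).derivative.eval z) * ((D j).eval 0 * G) = (P j).eval z * (N j).eval z := by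
      have hc := congrArg (Polynomial.eval z) (hN j)
      simp only [Polynomial.eval_mul] at hc
      rw [← hfact]
      exact hc
    have hMz : (M j).eval z = ((P j).derivative.eval z / (P j).eval z) * G := by
      have : (M j).eval z = ((D j).eval 0)⁻¹ * (N j).eval z := by
        simp [hM, Polynomial.eval_mul]
      rw [this]
      rw [inv_mul_eq_div, div_mul_eq_mul_div, div_eq_div_iff hD0ne hPz0]
      linear_combination -hNz
    rw [Complex.dist_eq]
    have hsplit : u z - (M j).eval z
        = (deriv f z / f z - (P j).derivative.eval z / (P j).eval z)
          - ((P j).derivative.eval z / (P j).eval z) * (G - 1) := by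
      rw [hMz, hu_def]
      ring
    rw [hsplit]
    have hP'z : Complex.abs ((P j).derivative.eval z) ≤ A + 1 := by
      have ht : Complex.abs ((P j).derivative.eval z) - Complex.abs (deriv f z) ≤
          Complex.abs ((P j).derivative.eval z - deriv f z) := by
        simpa [Complex.norm_eq_abs] using
          norm_sub_norm_le ((P j).derivative.eval z) (deriv f z)
      have hcomm : Complex.abs ((P j).derivative.eval z - deriv f z)
          = Complex.abs (deriv f z - (P j).derivative.eval z) := by
        rw [← neg_sub, map_neg_eq_map]
      have hdA := hdfA z hz
      rw [hcomm] at ht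
      linarith
    have hq : Complex.abs ((P j).derivative.eval z) / Complex.abs ((P j).eval z)
        ≤ (A+1)/(m/2) := by
      apply div_le_div₀ (by positivity) hP'z (by positivity) hPz
    have hterm2 : Complex.abs (((P j).derivative.eval z / (P j).eval z) * (G - 1)) ≤ δ/4 := by
      rw [map_mul, map_div₀]
      have hmm : Complex.abs ((P j).derivative.eval z) / Complex.abs ((P j).eval z)
          * Complex.abs (G - 1) ≤ ((A+1)/(m/2)) * η₃ := by
        apply mul_le_mul hq (hGbound.trans h4.le) (Complex.abs.nonneg _) (by positivity)
      refine hmm.trans ?_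
      rw [hη₃]
      rw [div_mul_div_comm]
      rw [div_le_iff₀ (by positivity)]
      ring_nf
      nlinarith [hm0, hA0, hδ.le]
    have hterm1 : Complex.abs (deriv f z / f z - (P j).derivative.eval z / (P j).eval z)
        ≤ δ/4 := by
      rw [div_sub_div _ _ (hfz z) hPz0, map_div₀, map_mul]
      have hnum : Complex.abs (deriv f z * (P j).eval z - f z * (P j).derivative.eval z)
          ≤ 2 * A * η := by
        have he : deriv f z * (P j).eval z - f z * (P j).derivative.eval z
            = deriv f z * ((P j).eval z - f z) + (deriv f z - (P j).derivative.eval z) * f z := by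
          ring
        rw [he]
        have ht1 : Complex.abs (deriv f z * ((P j).eval z - f z)) ≤ A * η := by
          rw [map_mul]
          have : Complex.abs ((P j).eval z - f z) = Complex.abs (f z - (P j).eval z) := by
            rw [← neg_sub, map_neg_eq_map]
          rw [this]
          exact mul_le_mul (hdfA z hz) h1z.le (Complex.abs.nonneg _) hA0
        have ht2 : Complex.abs ((deriv f z - (P j).derivative.eval z) * f z) ≤ η * A := by
          rw [map_mul]
          exact mul_le_mul h2z.le (hfA z hz) (Complex.abs.nonneg _) hη0.le
        calc Complex.abs (deriv f z * ((P j).eval z - f z)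
              + (deriv f z - (P j).derivative.eval z) * f z)
            ≤ Complex.abs (deriv f z * ((P j).eval z - f z))
              + Complex.abs ((deriv f z - (P j).derivative.eval z) * f z) :=
              Complex.abs.add_le _ _
          _ ≤ A * η + η * A := add_le_add ht1 ht2
          _ = 2 * A * η := by ring
      have hden : m * (m/2) ≤ Complex.abs (f z) * Complex.abs ((P j).eval z) := by
        apply mul_le_mul hfzm hPz (by positivity) (by positivity)
      calc Complex.abs (deriv f z * (P j).eval z - f z * (P j).derivative.eval z)
            / (Complex.abs (f z) * Complex.abs ((P j).eval z))
          ≤ (2 * A * η) / (m * (m/2)) := by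
            apply div_le_div₀ (by positivity) hnum (by positivity) hden
        _ ≤ δ/4 := by
            rw [div_le_iff₀ (by positivity)]
            nlinarith [hηδ, hm0, hA0, hη0.le]
    calc Complex.abs ((deriv f z / f z - (P j).derivative.eval z / (P j).eval z)
          - ((P j).derivative.eval z / (P j).eval z) * (G - 1))
        ≤ Complex.abs (deriv f z / f z - (P j).derivative.eval z / (P j).eval z)
          + Complex.abs (((P j).derivative.eval z / (P j).eval z) * (G - 1)) := by
          simpa [Complex.norm_eq_abs] using
            norm_sub_le (deriv f z / f z - (P j).derivative.eval z / (P j).eval z)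
              (((P j).derivative.eval z / (P j).eval z) * (G - 1))
      _ ≤ δ/4 + δ/4 := add_le_add hterm1 hterm2
      _ < δ := by linarith
  have hiter : ∀ k, TendstoLocallyUniformly
      (fun j z => (Polynomial.derivative^[k] (M j)).eval z) (iteratedDeriv k u) atTop := by
    intro k
    induction k with
    | zero => simpa using hMu
    | succ k ih =>
      have h := (tendstoLocallyUniformlyOn_univ.mpr ih).deriv
        (Filter.Eventually.of_forall fun j => (Polynomial.differentiable _).differentiableOn)
        isOpen_univ
      rw [tendstoLocallyUniformlyOn_univ] at h
      have he : (deriv ∘ fun j z => (Polynomial.derivative^[k] (M j)).eval z)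
          = fun j z => (Polynomial.derivative^[k+1] (M j)).eval z := by
        funext j z
        show deriv (fun z => (Polynomial.derivative^[k] (M j)).eval z) z = _
        rw [Function.iterate_succ_apply']
        simp [Polynomial.deriv]
      rw [he, ← iteratedDeriv_succ] at h
      exact h
  have hzero : ∀ z, iteratedDeriv n u z = 0 := by
    intro z
    have h := (tendstoLocallyUniformlyOn_univ.mpr (hiter n)).tendsto_at (Set.mem_univ z)
    have hz : (fun j => (Polynomial.derivative^[n] (M j)).eval z) = fun _ => (0:ℂ) := by
      funext j
      rw [Polynomial.iterate_derivative_eq_zero (hMdeg j)]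
      simp
    rw [hz] at h
    exact (tendsto_nhds_unique h tendsto_const_nhds)
  obtain ⟨p, hpdeg, hpu⟩ : ∃ p : Polynomial ℂ, p.natDegree < n ∧ ∀ z, u z = p.eval z :=
    aux_taylor n hn u hu (funext hzero)
  obtain ⟨Q₁, hQ₁der, hQ₁deg⟩ : ∃ Q : Polynomial ℂ, Q.derivative = p ∧
      Q.natDegree ≤ p.natDegree + 1 := aux_antideriv p
  have hQ₁n : Q₁.natDegree ≤ n := hQ₁deg.trans (by omega)
  have hexpd : Differentiable ℂ fun z => Complex.exp (-(Q₁.eval z)) :=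
    ((Polynomial.differentiable Q₁).neg).cexp
  have hder0 : ∀ x, deriv (fun z => f z * Complex.exp (-(Q₁.eval z))) x = 0 := by
    intro x
    have h1 : HasDerivAt f (deriv f x) x := (hf x).hasDerivAt
    have h2 : HasDerivAt (fun z => -(Q₁.eval z)) (-(p.eval x)) x := by
      have h := (Q₁.hasDerivAt x).neg
      rwa [hQ₁der] at h
    have h3 := h2.cexp
    have h4 := h1.fun_mul h3
    rw [h4.deriv]
    have hfd : deriv f x = p.eval x * f x := by
      have h := hpu x
      rw [hu_def] at h
      exact (div_eq_iff (hfz x)).mp h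
    rw [hfd]
    ring
  have hconst := is_const_of_deriv_eq_zero (hf.mul hexpd) hder0
  have hcz : ∀ z, f z * Complex.exp (-(Q₁.eval z)) = f 0 * Complex.exp (-(Q₁.eval 0)) :=
    fun z => hconst z 0
  have hcne : f 0 * Complex.exp (-(Q₁.eval 0)) ≠ 0 :=
    mul_ne_zero (hfz 0) (Complex.exp_ne_zero _)
  refine ⟨C (Complex.log (f 0 * Complex.exp (-(Q₁.eval 0)))) + Q₁, ?_, ?_⟩
  · refine (Polynomial.natDegree_add_le _ _).trans (max_le (by simp) hQ₁n)
  · intro z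
    have h := hcz z
    have h2 : f z = (f 0 * Complex.exp (-(Q₁.eval 0))) * Complex.exp (Q₁.eval z) := by
      rw [← h, mul_assoc, ← Complex.exp_add]
      simp
    rw [h2, eval_add, eval_C, Complex.exp_add, Complex.exp_log hcne]
end

section
/- For formal power series F = ∑_{n≥1} F_n X^n and G = ∑_{n≥1} G_n X^n over ℂ with zero constant term, define the exponential eñe product F ⋆ₑ G := -∑_{n≥1} n·F_n·G_n·X^n. For an integer k ≥ 1 and w ∈ ℂ∖{0}, let E_{k,w} := -∑_{n≥1} n^{k-1}·w^{-n}·X^n ∈ ℂ[[X]] (the expansion of R_k(X/w)). Then for every m ≥ 2, all integers k₁,…,k_m ≥ 1 and all z₁,…,z_m ∈ ℂ∖{0}: E_{k₁,z₁} ⋆ₑ E_{k₂,z₂} ⋆ₑ ⋯ ⋆ₑ E_{k_m,z_m} = E_{k₁+⋯+k_m, z₁·z₂⋯z_m}. -/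
/-- The exponential eñe product of two formal power series (with zero constant term):
`F ⋆ₑ G = -∑_{n≥1} n·Fₙ·Gₙ·Xⁿ`. -/
noncomputable def eneExp (F G : PowerSeries ℂ) : PowerSeries ℂ :=
  PowerSeries.mk fun n =>
    -((n : ℂ) * PowerSeries.coeff n F * PowerSeries.coeff n G)

/-- `E k w = -∑_{n≥1} n^(k-1)·w⁻ⁿ·Xⁿ`, the expansion of the Euler rational function
`R k (X/w)`. -/
noncomputable def eulerSeries (k : ℕ) (w : ℂ) : PowerSeries ℂ :=
  PowerSeries.mk fun n => if n = 0 then 0 else -((n : ℂ) ^ (k - 1) * (w ^ n)⁻¹)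

lemma eneExp_euler (a b : ℕ) (ha : 1 ≤ a) (hb : 1 ≤ b) (w v : ℂ) :
    eneExp (eulerSeries a w) (eulerSeries b v) = eulerSeries (a + b) (w * v) := by
  ext n
  simp only [eneExp, eulerSeries, PowerSeries.coeff_mk]
  rcases eq_or_ne n 0 with rfl | hn
  · simp
  · simp only [hn, if_false]
    rw [mul_pow, mul_inv]
    have : a + b - 1 = (a - 1) + (b - 1) + 1 := by omega
    rw [this, pow_add, pow_add, pow_one]
    ring

lemma foldl_euler (n : ℕ) (k : Fin n → ℕ) (z : Fin n → ℂ) (hk : ∀ i, 1 ≤ k i)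
    (K : ℕ) (hK : 1 ≤ K) (W : ℂ) :
    Fin.foldl n (fun acc i => eneExp acc (eulerSeries (k i) (z i))) (eulerSeries K W)
      = eulerSeries (K + ∑ i, k i) (W * ∏ i, z i) := by
  induction n generalizing K W with
  | zero => simp
  | succ n ih =>
    rw [Fin.foldl_succ, eneExp_euler K (k 0) hK (hk 0),
      ih (fun i => k i.succ) (fun i => z i.succ) (fun i => hk i.succ) _ (by omega),
      Fin.sum_univ_succ, Fin.prod_univ_succ, ← add_assoc, ← mul_assoc]

/-- For `m ≥ 2` factors, integers `k i ≥ 1` and nonzero `z i`: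
`E_{k₁,z₁} ⋆ₑ ⋯ ⋆ₑ E_{k_m,z_m} = E_{k₁+⋯+k_m, z₁⋯z_m}`. -/
theorem eneExp_eulerSeries_multi
    (m : ℕ) (k : Fin (m + 2) → ℕ) (z : Fin (m + 2) → ℂ)
    (hk : ∀ i, 1 ≤ k i) (hz : ∀ i, z i ≠ 0) :
    Fin.foldl (m + 1)
        (fun acc i => eneExp acc (eulerSeries (k i.succ) (z i.succ)))
        (eulerSeries (k 0) (z 0))
      = eulerSeries (∑ i, k i) (∏ i, z i) := by
  rw [foldl_euler (m + 1) (fun i => k i.succ) (fun i => z i.succ)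
      (fun i => hk i.succ) (k 0) (hk 0) (z 0),
    Fin.sum_univ_succ (f := k), Fin.prod_univ_succ (f := z)]
end

section
/- For k ≥ 1 define the Euler rational functions R_k ∈ ℂ(X) recursively by R_1(X) = -X/(1-X) and R_{k+1}(X) = X·(dR_k/dX), and for w ∈ ℂ∖{0} let R_k(X/w) denote the rational function obtained by substituting X ↦ X/w. Then every rational function R ∈ ℂ(X) can be written as a finite sum R(X) = c + Q_∞(X) + Q₀(1/X) + ∑_{i=1}^N α_i · R_{k_i}(X/w_i), where c ∈ ℂ, Q₀ and Q_∞ are polynomials in ℂ[X] with zero constant term, N ≥ 0, α_i ∈ ℂ, k_i ≥ 1 are integers, and w_i ∈ ℂ∖{0}. -/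
open Filter Topology

open Polynomial


noncomputable def Pk : ℕ → Polynomial ℂ
  | 0 => X
  | (k+1) => X * (derivative (Pk k) * (X - 1) - C ((k:ℂ)+1) * Pk k)

lemma Pk_natDegree_le (k : ℕ) : (Pk k).natDegree ≤ k + 1 := by
  induction k with
  | zero => simp [Pk]
  | succ k ih =>
    have h1 : (derivative (Pk k)).natDegree ≤ k := by
      have := natDegree_derivative_le (Pk k)
      omega
    calc (Pk (k+1)).natDegree ≤ (X : ℂ[X]).natDegree +
          (derivative (Pk k) * (X - 1) - C ((k:ℂ)+1) * Pk k).natDegree := natDegree_mul_le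
      _ ≤ 1 + max (derivative (Pk k) * (X - 1)).natDegree (C ((k:ℂ)+1) * Pk k).natDegree := by
          have := natDegree_sub_le (derivative (Pk k) * (X - 1)) (C ((k:ℂ)+1) * Pk k)
          simp only [natDegree_X]
          omega
      _ ≤ k + 2 := by
          have h2 : (derivative (Pk k) * (X - 1)).natDegree ≤ k + 1 := by
            refine natDegree_mul_le.trans ?_
            have : (X - 1 : ℂ[X]).natDegree ≤ 1 := by
              simpa using natDegree_X_sub_C_le (1 : ℂ)
            omega
          have h3 : (C ((k:ℂ)+1) * Pk k).natDegree ≤ k + 1 :=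
            (natDegree_C_mul_le _ _).trans ih
          omega

lemma Pk_eval_one (k : ℕ) : (Pk k).eval 1 ≠ 0 := by
  induction k with
  | zero => simp [Pk]
  | succ k ih =>
    have : (Pk (k+1)).eval 1 = -((k:ℂ)+1) * (Pk k).eval 1 := by
      simp [Pk]; ring
    rw [this]
    refine mul_ne_zero ?_ ih
    have h : ((k:ℂ)+1) ≠ 0 := Nat.cast_add_one_ne_zero k
    intro hcon
    exact h (by linear_combination -hcon)

section
variable (R : ℕ → ℂ → ℂ)
    (hR1 : ∀ z : ℂ, z ≠ 1 → R 1 z = -(z / (1 - z)))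
    (hRrec : ∀ k : ℕ, 1 ≤ k → ∀ z : ℂ, z ≠ 1 → R (k + 1) z = z * deriv (R k) z)

include hR1 hRrec in
lemma R_eq (k : ℕ) : ∀ z : ℂ, z ≠ 1 → R (k+1) z = (Pk k).eval z / (z-1)^(k+1) := by
  induction k with
  | zero =>
    intro z hz
    rw [hR1 z hz]
    have h1 : (1:ℂ) - z ≠ 0 := by
      intro h; apply hz; linear_combination -h
    have h2 : z - 1 ≠ 0 := sub_ne_zero.mpr hz
    simp only [Pk, eval_X, pow_one]
    field_simp
    ring
  | succ k ih =>
    intro z hz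
    have h2 : z - 1 ≠ 0 := sub_ne_zero.mpr hz
    rw [hRrec (k+1) (by omega) z hz]
    have hd : deriv (R (k+1)) z
        = deriv (fun u => (Pk k).eval u / (u-1)^(k+1)) z := by
      apply Filter.EventuallyEq.deriv_eq
      have hmem : {u : ℂ | u ≠ 1} ∈ 𝓝 z := by
        exact IsOpen.mem_nhds isOpen_ne hz
      filter_upwards [hmem] with u hu
      exact ih u hu
    rw [hd]
    have hnum : HasDerivAt (fun u : ℂ => (Pk k).eval u)
        ((derivative (Pk k)).eval z) z := (Pk k).hasDerivAt z
    have hden : HasDerivAt (fun u : ℂ => (u-1)^(k+1))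
        (((k:ℂ)+1) * (z-1)^k) z := by
      have := ((hasDerivAt_id z).sub_const 1).fun_pow (k+1)
      simpa [Nat.add_sub_cancel] using this
    have hder := (hnum.fun_div hden (pow_ne_zero _ h2)).deriv
    rw [hder]
    simp only [Pk, eval_mul, eval_X, eval_sub, eval_mul, eval_C, eval_one]
    field_simp
    ring

def ELin (R : ℕ → ℂ → ℂ) (f : ℂ → ℂ) : Prop :=
  ∃ (c : ℂ) (N : ℕ) (β : Fin N → ℂ) (k : Fin N → ℕ),
    (∀ i, 1 ≤ k i) ∧ ∀ u : ℂ, u ≠ 1 → f u = c + ∑ i, β i * R (k i) u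

lemma ELin.const (R : ℕ → ℂ → ℂ) (a : ℂ) : ELin R (fun _ => a) :=
  ⟨a, 0, Fin.elim0, Fin.elim0, by simp, by simp⟩

lemma ELin.congr {R f g} (h : ELin R f) (hfg : ∀ u : ℂ, u ≠ 1 → f u = g u) : ELin R g := by
  obtain ⟨c, N, β, k, hk, he⟩ := h
  exact ⟨c, N, β, k, hk, fun u hu => (hfg u hu) ▸ he u hu⟩

lemma ELin.add {R f g} (hf : ELin R f) (hg : ELin R g) : ELin R (f + g) := by
  obtain ⟨c1, N1, β1, k1, hk1, he1⟩ := hf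
  obtain ⟨c2, N2, β2, k2, hk2, he2⟩ := hg
  refine ⟨c1 + c2, N1 + N2, Fin.append β1 β2, Fin.append k1 k2, ?_, ?_⟩
  · intro i
    refine Fin.addCases (fun j => ?_) (fun j => ?_) i <;>
      simp [Fin.append_left, Fin.append_right, hk1, hk2]
  · intro u hu
    simp only [Pi.add_apply, he1 u hu, he2 u hu, Fin.sum_univ_add, Fin.append_left,
      Fin.append_right]
    ring

lemma ELin.smul {R f} (a : ℂ) (hf : ELin R f) : ELin R (fun u => a * f u) := by
  obtain ⟨c, N, β, k, hk, he⟩ := hf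
  refine ⟨a * c, N, fun i => a * β i, k, hk, fun u hu => ?_⟩
  simp only [he u hu, Finset.mul_sum, mul_add, mul_assoc]

lemma ELin.sum {R} {ι : Type*} (s : Finset ι) (f : ι → ℂ → ℂ)
    (h : ∀ i ∈ s, ELin R (f i)) : ELin R (fun u => ∑ i ∈ s, f i u) := by
  classical
  induction s using Finset.induction_on with
  | empty => simpa using ELin.const R 0
  | @insert a s hx ih =>
    have := (h a (Finset.mem_insert_self a s)).add
      (ih fun i hi => h i (Finset.mem_insert_of_mem hi))
    exact this.congr (by intro u hu; simp [Finset.sum_insert hx, add_comm])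

include hR1 hRrec in
lemma ELin_R (m : ℕ) : ELin R (fun u => R (m+1) u) := by
  refine ⟨0, 1, fun _ => 1, fun _ => m+1, by simp, fun u hu => by simp⟩

include hR1 hRrec in
lemma ELin_inv_pow (j : ℕ) : ELin R (fun u => ((u-1)⁻¹)^j) := by
  induction j using Nat.strong_induction_on with
  | _ j IH =>
    match j with
    | 0 => exact (ELin.const R 1).congr (by simp)
    | (j+1) =>
      set P := Pk j with hP
      set a : ℕ → ℂ := fun i => (Polynomial.taylor 1 P).coeff i with ha
      have ha0 : a 0 ≠ 0 := by
        simpa [ha, Polynomial.taylor_coeff_zero] using Pk_eval_one j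
      have hPsum : ∀ u : ℂ, P.eval u = ∑ i ∈ Finset.range (j+2), a i * (u-1)^i := by
        intro u
        have h1 : P.eval u = (Polynomial.taylor 1 P).eval (u - 1) :=
          (Polynomial.taylor_eval_sub 1 P u).symm
        rw [h1, Polynomial.eval_eq_sum_range' (n := j+2)]
        rw [Polynomial.natDegree_taylor]
        exact lt_of_le_of_lt (Pk_natDegree_le j) (by omega)
      have hg : ELin R (fun u => (a 0)⁻¹ * R (j+1) u
          - ∑ i ∈ Finset.range (j+1), ((a 0)⁻¹ * a (i+1)) * ((u-1)⁻¹)^(j-i)) := by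
        have h1 := (ELin_R R hR1 hRrec j).smul ((a 0)⁻¹)
        have h2 : ELin R (fun u => ∑ i ∈ Finset.range (j+1),
            ((a 0)⁻¹ * a (i+1)) * ((u-1)⁻¹)^(j-i)) := by
          refine ELin.sum _ _ fun i hi => ?_
          exact (IH (j-i) (by omega)).smul _
        have := h1.add (h2.smul (-1))
        exact this.congr (by intro u hu; simp; ring)
      refine hg.congr ?_
      intro u hu
      have hu1 : u - 1 ≠ 0 := sub_ne_zero.mpr hu
      have hR := R_eq R hR1 hRrec j u hu
      rw [hR, hPsum u, Finset.sum_range_succ']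
      have key : ∀ i ∈ Finset.range (j+1),
          a (i+1) * (u-1)^(i+1) / (u-1)^(j+1) = a (i+1) * ((u-1)⁻¹)^(j-i) := by
        intro i hi
        simp only [Finset.mem_range] at hi
        have hje : (j+1) = (i+1) + (j - i) := by omega
        rw [hje, pow_add, inv_pow]
        field_simp
        ring
      rw [add_div, Finset.sum_div, Finset.sum_congr rfl key]
      set S := ∑ i ∈ Finset.range (j+1), a (i+1) * ((u-1)⁻¹)^(j-i) with hS
      have hS' : ∑ i ∈ Finset.range (j+1), ((a 0)⁻¹ * a (i+1)) * ((u-1)⁻¹)^(j-i)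
          = (a 0)⁻¹ * S := by
        rw [hS, Finset.mul_sum]; exact Finset.sum_congr rfl (by intros; ring)
      rw [hS']
      have hpow : a 0 * (u-1)^(j+1) ≠ 0 := mul_ne_zero ha0 (pow_ne_zero _ hu1)
      rw [inv_pow]
      field_simp
      ring


def Dec (f : ℂ → ℂ) (s : Set ℂ) : Prop :=
  ∃ (c : ℂ) (Qinf Q0 : Polynomial ℂ) (N : ℕ) (α : Fin N → ℂ) (k : Fin N → ℕ)
      (w : Fin N → ℂ),
      Qinf.coeff 0 = 0 ∧ Q0.coeff 0 = 0 ∧ (∀ i, 1 ≤ k i) ∧ (∀ i, w i ≠ 0) ∧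
      ∀ z : ℂ, z ≠ 0 → z ∉ s → (∀ i, z ≠ w i) →
        f z = c + Qinf.eval z + Q0.eval z⁻¹ + ∑ i, α i * R (k i) (z / w i)

omit hR1 hRrec

lemma Dec.mono {f s t} (h : Dec R f s) (hst : s ⊆ t) : Dec R f t := by
  obtain ⟨c, Qinf, Q0, N, α, k, w, h1, h2, h3, h4, h5⟩ := h
  exact ⟨c, Qinf, Q0, N, α, k, w, h1, h2, h3, h4,
    fun z hz hzs hzw => h5 z hz (fun hc => hzs (hst hc)) hzw⟩

lemma Dec.congr {f g s} (h : Dec R f s) (hfg : ∀ z : ℂ, z ≠ 0 → z ∉ s → f z = g z) :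
    Dec R g s := by
  obtain ⟨c, Qinf, Q0, N, α, k, w, h1, h2, h3, h4, h5⟩ := h
  exact ⟨c, Qinf, Q0, N, α, k, w, h1, h2, h3, h4,
    fun z hz hzs hzw => (hfg z hz hzs) ▸ h5 z hz hzs hzw⟩

lemma Dec.add {f g s} (hf : Dec R f s) (hg : Dec R g s) :
    Dec R (fun z => f z + g z) s := by
  obtain ⟨c1, Qinf1, Q01, N1, α1, k1, w1, ha1, hb1, hc1, hd1, he1⟩ := hf
  obtain ⟨c2, Qinf2, Q02, N2, α2, k2, w2, ha2, hb2, hc2, hd2, he2⟩ := hg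
  refine ⟨c1 + c2, Qinf1 + Qinf2, Q01 + Q02, N1 + N2, Fin.append α1 α2,
    Fin.append k1 k2, Fin.append w1 w2, by simp [ha1, ha2], by simp [hb1, hb2], ?_, ?_, ?_⟩
  · intro i
    refine Fin.addCases (fun j => ?_) (fun j => ?_) i <;>
      simp [Fin.append_left, Fin.append_right, hc1, hc2]
  · intro i
    refine Fin.addCases (fun j => ?_) (fun j => ?_) i <;>
      simp [Fin.append_left, Fin.append_right, hd1, hd2]
  · intro z hz hzs hzw
    have hzw1 : ∀ i, z ≠ w1 i := fun i => by
      have := hzw (Fin.castAdd N2 i); rwa [Fin.append_left] at this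
    have hzw2 : ∀ i, z ≠ w2 i := fun i => by
      have := hzw (Fin.natAdd N1 i); rwa [Fin.append_right] at this
    show f z + g z = _
    rw [he1 z hz hzs hzw1, he2 z hz hzs hzw2]
    simp only [Fin.sum_univ_add, Fin.append_left, Fin.append_right, Polynomial.eval_add]
    ring

lemma Dec.smul {f s} (a : ℂ) (hf : Dec R f s) : Dec R (fun z => a * f z) s := by
  obtain ⟨c, Qinf, Q0, N, α, k, w, h1, h2, h3, h4, h5⟩ := hf
  refine ⟨a * c, Polynomial.C a * Qinf, Polynomial.C a * Q0, N, fun i => a * α i, k, w,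
    by simp [h1], by simp [h2], h3, h4, ?_⟩
  intro z hz hzs hzw
  show a * f z = _
  rw [h5 z hz hzs hzw]
  simp only [Polynomial.eval_mul, Polynomial.eval_C]
  rw [mul_add, mul_add, mul_add, Finset.mul_sum]
  congr 1
  exact Finset.sum_congr rfl fun i _ => by ring

lemma Dec.sum {ι : Type*} (t : Finset ι) (f : ι → ℂ → ℂ) {s}
    (h : ∀ i ∈ t, Dec R (f i) s) : Dec R (fun z => ∑ i ∈ t, f i z) s := by
  classical
  induction t using Finset.induction_on with
  | empty =>
    have h0 : Dec R (fun _ : ℂ => (0:ℂ)) s :=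
      ⟨0, 0, 0, 0, Fin.elim0, Fin.elim0, Fin.elim0, by simp, by simp, by simp, by simp,
        fun z hz hzs hzw => by simp⟩
    exact h0.congr R (by intro z hz hzs; simp)
  | @insert a t hx ih =>
    have := (Dec.add R (h a (Finset.mem_insert_self a t))
      (ih fun i hi => h i (Finset.mem_insert_of_mem hi)))
    exact this.congr R (by intro z hz hzs; simp [Finset.sum_insert hx])

lemma Dec.poly (p : Polynomial ℂ) (s : Set ℂ) : Dec R (fun z => p.eval z) s := by
  refine ⟨p.coeff 0, p - Polynomial.C (p.coeff 0), 0, 0, Fin.elim0, Fin.elim0, Fin.elim0,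
    by simp, by simp, by simp, by simp, fun z hz hzs hzw => by simp⟩


lemma Dec.invpow (hR1' : ∀ z : ℂ, z ≠ 1 → R 1 z = -(z / (1 - z)))
    (hRrec' : ∀ k : ℕ, 1 ≤ k → ∀ z : ℂ, z ≠ 1 → R (k + 1) z = z * deriv (R k) z)
    (w : ℂ) (j : ℕ) (hj : 1 ≤ j) :
    Dec R (fun z => ((z - w)⁻¹)^j) {w} := by
  by_cases hw : w = 0
  · subst hw
    refine ⟨0, 0, Polynomial.X ^ j, 0, Fin.elim0, Fin.elim0, Fin.elim0, by simp, ?_, by simp,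
      by simp, ?_⟩
    · rw [Polynomial.coeff_X_pow, if_neg (by omega)]
    · intro z hz hzs hzw
      simp [inv_pow]
  · obtain ⟨c, N, β, k, hk, he⟩ := ELin_inv_pow R hR1' hRrec' j
    refine ⟨w⁻¹^j * c, 0, 0, N, fun i => w⁻¹^j * β i, k, fun _ => w, by simp, by simp, hk,
      fun _ => hw, ?_⟩
    intro z hz hzs hzw
    have hzw' : z / w ≠ 1 := by
      intro hc
      apply hzs
      have : z = w := by field_simp at hc; simpa using hc
      simp [this]
    have := he (z / w) hzw'
    have hsub : ((z - w)⁻¹)^j = w⁻¹^j * ((z / w - 1)⁻¹)^j := by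
      rw [← mul_pow, ← mul_inv]
      congr 2
      field_simp
    show (z - w)⁻¹ ^ j = _
    simp only [] at this ⊢
    rw [hsub, this]
    simp only [Polynomial.eval_zero, add_zero, mul_add, Finset.mul_sum]
    congr 1
    exact Finset.sum_congr rfl fun i _ => by ring

lemma Dec.main (hR1' : ∀ z : ℂ, z ≠ 1 → R 1 z = -(z / (1 - z)))
    (hRrec' : ∀ k : ℕ, 1 ≤ k → ∀ z : ℂ, z ≠ 1 → R (k + 1) z = z * deriv (R k) z) :
    ∀ (n : ℕ) (q : Polynomial ℂ), q ≠ 0 → q.natDegree ≤ n → ∀ p : Polynomial ℂ,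
      Dec R (fun z => p.eval z / q.eval z) {z | q.eval z = 0} := by
  intro n
  induction n with
  | zero =>
    intro q hq hdeg p
    have hqC : q = Polynomial.C (q.coeff 0) := Polynomial.eq_C_of_natDegree_le_zero hdeg
    have ha : q.coeff 0 ≠ 0 := fun h => hq (by rw [hqC, h, map_zero])
    have := (Dec.poly R p {z : ℂ | q.eval z = 0}).smul R (q.coeff 0)⁻¹
    refine this.congr R ?_
    intro z hz hzs
    rw [hqC]
    simp [div_eq_inv_mul]
  | succ n IH =>
    intro q hq hdeg p
    by_cases hdeg' : q.natDegree ≤ n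
    · exact IH q hq hdeg' p
    have hdq : q.natDegree = n + 1 := by omega
    have hdegpos : 0 < q.degree := by
      rw [Polynomial.degree_eq_natDegree hq, hdq]
      exact_mod_cast Nat.succ_pos n
    obtain ⟨w, hw⟩ := Complex.exists_root hdegpos
    set m := Polynomial.rootMultiplicity w q with hm
    have hm1 : 1 ≤ m := (Polynomial.rootMultiplicity_pos hq).mpr hw
    obtain ⟨m', hm'⟩ : ∃ m', m = m' + 1 := ⟨m - 1, by omega⟩
    set q₁ := q /ₘ (Polynomial.X - Polynomial.C w) ^ m with hq₁
    have hfac : (Polynomial.X - Polynomial.C w) ^ m * q₁ = q :=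
      q.pow_mul_divByMonic_rootMultiplicity_eq w
    have hq₁w : q₁.eval w ≠ 0 := Polynomial.eval_divByMonic_pow_rootMultiplicity_ne_zero w hq
    have hq₁0 : q₁ ≠ 0 := fun h => hq₁w (by rw [h]; simp)
    have hdq₁ : m + q₁.natDegree = n + 1 := by
      have := congrArg Polynomial.natDegree hfac
      rw [Polynomial.natDegree_mul (pow_ne_zero _ (Polynomial.X_sub_C_ne_zero w)) hq₁0,
        Polynomial.natDegree_pow, Polynomial.natDegree_X_sub_C, hdq] at this
      omega
    set b := q₁.eval w with hb
    obtain ⟨g, hg⟩ : ∃ g, q₁ - Polynomial.C b = (Polynomial.X - Polynomial.C w) * g :=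
      Polynomial.X_sub_C_dvd_sub_C_eval
    set r := p %ₘ (Polynomial.X - Polynomial.C w) ^ m with hr
    set p₂ := p /ₘ (Polynomial.X - Polynomial.C w) ^ m with hp₂
    have hmonic : ((Polynomial.X - Polynomial.C w) ^ m).Monic :=
      (Polynomial.monic_X_sub_C w).pow m
    have hpdec : r + (Polynomial.X - Polynomial.C w) ^ m * p₂ = p :=
      Polynomial.modByMonic_add_div p _
    have hrdeg : r.natDegree < m := by
      have h1 := Polynomial.degree_modByMonic_lt p hmonic
      have h2 : r.degree < (m : ℕ) := by
        simpa [Polynomial.degree_pow, Polynomial.degree_X_sub_C] using h1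
      rcases eq_or_ne r 0 with h | h
      · rw [h]; simp; omega
      · exact (Polynomial.natDegree_lt_iff_degree_lt h).mpr h2
    set d : ℕ → ℂ := fun i => (Polynomial.taylor w r).coeff i with hd
    have hrsum : ∀ z : ℂ, r.eval z = ∑ i ∈ Finset.range m, d i * (z - w)^i := by
      intro z
      have h1 : r.eval z = (Polynomial.taylor w r).eval (z - w) :=
        (Polynomial.taylor_eval_sub w r z).symm
      rw [h1, Polynomial.eval_eq_sum_range' (n := m)]
      rw [Polynomial.natDegree_taylor]
      exact hrdeg
    clear_value m q₁ r p₂ b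
    -- the three pieces
    have piece1 : Dec R (fun z => p₂.eval z / q₁.eval z) {z | q.eval z = 0} := by
      refine (IH q₁ hq₁0 (by clear hrsum hrdeg hpdec; omega) p₂).mono R ?_
      intro z hz
      simp only [Set.mem_setOf_eq] at hz ⊢
      rw [← hfac]; simp [hz]
    have piece2 : Dec R (fun z => ∑ i ∈ Finset.range m,
        (b⁻¹ * d i) * ((z - w)⁻¹)^(m - i)) {z | q.eval z = 0} := by
      refine (Dec.sum R (s := {w}) _ _ fun i hi => ?_).mono R ?_
      · exact (Dec.invpow R hR1' hRrec' w (m - i) (by simp at hi; omega)).smul R _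
      · intro z hz
        simp only [Set.mem_singleton_iff] at hz
        simp only [Set.mem_setOf_eq, hz]
        exact hw
    have piece3 : Dec R (fun z => (-b⁻¹) * ((r * g).eval z /
        (((Polynomial.X - Polynomial.C w) ^ m' * q₁).eval z))) {z | q.eval z = 0} := by
      have hq' : (Polynomial.X - Polynomial.C w) ^ m' * q₁ ≠ 0 :=
        mul_ne_zero (pow_ne_zero _ (Polynomial.X_sub_C_ne_zero w)) hq₁0
      have hdq' : ((Polynomial.X - Polynomial.C w) ^ m' * q₁).natDegree ≤ n := by
        rw [Polynomial.natDegree_mul (pow_ne_zero _ (Polynomial.X_sub_C_ne_zero w)) hq₁0,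
          Polynomial.natDegree_pow, Polynomial.natDegree_X_sub_C, mul_one]
        omega
      refine ((IH _ hq' hdq' (r * g)).smul R (-b⁻¹)).mono R ?_
      intro z hz
      simp only [Set.mem_setOf_eq] at hz ⊢
      rw [← hfac, hm']
      simp only [Polynomial.eval_mul, Polynomial.eval_pow, pow_succ] at hz ⊢
      linear_combination Polynomial.eval z (Polynomial.X - Polynomial.C w) * hz
    -- combine
    have hcomb := (piece1.add R piece2).add R piece3
    refine hcomb.congr R ?_
    intro z hz hzs
    simp only [Set.mem_setOf_eq] at hzs
    have hqz : q.eval z ≠ 0 := hzs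
    have hzw : z - w ≠ 0 := by
      intro h
      apply hqz
      rw [sub_eq_zero.mp h]
      exact hw
    have hq₁z : q₁.eval z ≠ 0 := by
      intro h; apply hqz; rw [← hfac]; simp [h]
    -- evaluate the polynomial identities at z
    have hqev : q.eval z = (z - w)^m * q₁.eval z := by
      rw [← hfac]; simp
    have hpev : p.eval z = r.eval z + (z - w)^m * p₂.eval z := by
      rw [← hpdec]; simp
    have hgev : q₁.eval z = (z - w) * g.eval z + b := by
      have := congrArg (Polynomial.eval z) hg
      simp at this
      linear_combination this
    -- key: r z / (z-w)^m = sum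
    have hkey : r.eval z / (z - w)^m
        = ∑ i ∈ Finset.range m, d i * ((z - w)⁻¹)^(m - i) := by
      rw [hrsum z, Finset.sum_div]
      refine Finset.sum_congr rfl fun i hi => ?_
      simp only [Finset.mem_range] at hi
      have hje : m = i + (m - i) := by omega
      rw [hje, pow_add, inv_pow]
      field_simp
      simp
    have hbne : b ≠ 0 := hq₁w
    have hpow : (z - w)^m = (z - w) * (z - w)^m' := by
      rw [hm']; ring
    have hsum2 : ∑ i ∈ Finset.range m, (b⁻¹ * d i) * ((z - w)⁻¹)^(m - i)
        = b⁻¹ * (r.eval z / (z - w)^m) := by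
      rw [hkey, Finset.mul_sum]
      exact Finset.sum_congr rfl fun i _ => by ring
    have hrg : (r * g).eval z = r.eval z * g.eval z := by simp
    have hq'ev : ((Polynomial.X - Polynomial.C w) ^ m' * q₁).eval z
        = (z - w)^m' * q₁.eval z := by simp
    have hB0 : (z - w) * g.eval z + b ≠ 0 := by rw [← hgev]; exact hq₁z
    have e1 : b⁻¹ * (r.eval z / (z - w)^m)
        + -b⁻¹ * (r.eval z * g.eval z / ((z - w)^m' * q₁.eval z))
        = r.eval z / ((z - w)^m * q₁.eval z) := by
      rw [hpow, hgev]
      have hpm : (z - w)^m' ≠ 0 := pow_ne_zero _ hzw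
      field_simp
      ring
    have e2 : (r.eval z + (z - w)^m * p₂.eval z) / ((z - w)^m * q₁.eval z)
        = p₂.eval z / q₁.eval z + r.eval z / ((z - w)^m * q₁.eval z) := by
      have hpm : (z - w)^m ≠ 0 := pow_ne_zero _ hzw
      field_simp
      ring
    show (fun z => _) z = _
    simp only []
    rw [hsum2, hrg, hq'ev, hqev, hpev, e2, add_assoc, e1]
  

end


/-- Let `R k : ℂ → ℂ` be the Euler rational functions, determined (away
from the pole `1`) by `R 1 z = -z/(1-z)` and `R (k+1) z = z · (R k)'(z)`. Then every
rational function `p/q` decomposes as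
`p/q = c + Q∞(z) + Q₀(1/z) + ∑ i, α i · R (k i) (z / w i)` (as functions, wherever all
terms are defined), with `Q∞, Q₀` polynomials with zero constant term, `k i ≥ 1` and
`w i ≠ 0`. -/
theorem rational_decomposition_euler
    (R : ℕ → ℂ → ℂ)
    (hR1 : ∀ z : ℂ, z ≠ 1 → R 1 z = -(z / (1 - z)))
    (hRrec : ∀ k : ℕ, 1 ≤ k → ∀ z : ℂ, z ≠ 1 → R (k + 1) z = z * deriv (R k) z)
    (p q : Polynomial ℂ) (hq : q ≠ 0) :
    ∃ (c : ℂ) (Qinf Q0 : Polynomial ℂ) (N : ℕ) (α : Fin N → ℂ) (k : Fin N → ℕ)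
      (w : Fin N → ℂ),
      Qinf.coeff 0 = 0 ∧ Q0.coeff 0 = 0 ∧ (∀ i, 1 ≤ k i) ∧ (∀ i, w i ≠ 0) ∧
      ∀ z : ℂ, z ≠ 0 → q.eval z ≠ 0 → (∀ i, z ≠ w i) →
        p.eval z / q.eval z
          = c + Qinf.eval z + Q0.eval z⁻¹ + ∑ i, α i * R (k i) (z / w i) := by
  obtain ⟨c, Qinf, Q0, N, α, k, w, h1, h2, h3, h4, h5⟩ :=
    Dec.main R hR1 hRrec q.natDegree q hq le_rfl p
  exact ⟨c, Qinf, Q0, N, α, k, w, h1, h2, h3, h4,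
    fun z hz hqz hzw => h5 z hz hqz hzw⟩
end
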